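/- arXiv:math/0511137 — 7 statements merged into one kernel-verified Lean document; each statement's English description precedes it below -/
import Mathlib

section
/- The GNS construction: If A is a (unital) C*-algebra and φ is a positive linear functional on A, then there exists a complex Hilbert space H, a star-algebra representation π of A by bounded operators on H, and a vector ξ₀ ∈ H which is cyclic for π (i.e., the linear span of {π(x)ξ₀ : x ∈ A} is dense in H) such that ⟨π(x)ξ₀, ξ₀⟩ = φ(x) for all x ∈ A. -/
open scoped InnerProductSpace ComplexOrder Classical
open Complex

noncomputable section

/-- A kernel `K : X × X → ℂ` is positive definite if every finite quadratic form
`∑ i j, K (x i) (x j) * ξ i * conj (ξ j)` is a nonnegative real number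
(expressed via the partial order on `ℂ`). -/
def IsPosDefKernel {X : Type*} (K : X → X → ℂ) : Prop :=
  ∀ (n : ℕ) (x : Fin n → X) (ξ : Fin n → ℂ),
    0 ≤ ∑ i, ∑ j, K (x i) (x j) * ξ i * (starRingEnd ℂ) (ξ j)

/-- `(H, v)` is a Kolmogorov representation of the kernel `K`: the span of the range of `v`
is dense and inner products of the `v x` reproduce `K`.  Mathlib's inner product is
conjugate-linear in the first variable, while the paper's is conjugate-linear in the second,
so the paper's `⟨v x, v y⟩ = K x y` reads `⟪v y, v x⟫_ℂ = K x y` here. -/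
def IsKolmogorovRep {X : Type*} (K : X → X → ℂ) (H : Type*) [NormedAddCommGroup H]
    [InnerProductSpace ℂ H] (v : X → H) : Prop :=
  Dense (↑(Submodule.span ℂ (Set.range v)) : Set H) ∧
    ∀ x y : X, ⟪v y, v x⟫_ℂ = K x y

/-- `L² ≤ c K K'` in the sense of Dutkay. -/
def KernelSqLE {X : Type*} (L K K' : X → X → ℂ) (c : ℝ) : Prop :=
  ∀ (m n : ℕ) (x : Fin m → X) (y : Fin n → X) (ξ : Fin m → ℂ) (η : Fin n → ℂ),
    ‖∑ i, ∑ j, L (x i) (y j) * ξ i * (starRingEnd ℂ) (η j)‖ ^ 2 ≤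
      c * (∑ i, ∑ i', K (x i) (x i') * ξ i * (starRingEnd ℂ) (ξ i')).re *
        (∑ j, ∑ j', K' (y j) (y j') * η j * (starRingEnd ℂ) (η j')).re

/-- `K' ≤ c K` for kernels, via the partial order on `ℂ`. -/
def KernelLE {X : Type*} (K' K : X → X → ℂ) (c : ℝ) : Prop :=
  ∀ (n : ℕ) (x : Fin n → X) (ξ : Fin n → ℂ),
    ∑ i, ∑ j, K' (x i) (x j) * ξ i * (starRingEnd ℂ) (ξ j) ≤
      (c : ℂ) * ∑ i, ∑ j, K (x i) (x j) * ξ i * (starRingEnd ℂ) (ξ j)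

/-- A bounded operator is positive if `⟨S v, v⟩ ≥ 0` for all `v` (paper convention;
in Mathlib's convention this is `0 ≤ ⟪v, S v⟫`). -/
def IsPositiveOp {H : Type*} [NormedAddCommGroup H] [InnerProductSpace ℂ H]
    (S : H →L[ℂ] H) : Prop :=
  ∀ v : H, 0 ≤ ⟪v, S v⟫_ℂ

/-- A family of vectors is a normalized tight frame. -/
def IsNormalizedTightFrame {H : Type*} [NormedAddCommGroup H] [InnerProductSpace ℂ H]
    {ι : Type*} (v : ι → H) : Prop :=
  ∀ f : H, ∑' i, ‖⟪v i, f⟫_ℂ‖ ^ 2 = ‖f‖ ^ 2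

/-- `P` is the orthogonal projection onto the set `S`: idempotent, self-adjoint,
with range `S`. -/
def IsOrthProjectionOnto {H : Type*} [NormedAddCommGroup H] [InnerProductSpace ℂ H]
    (P : H →L[ℂ] H) (S : Set H) : Prop :=
  (∀ v, P (P v) = P v) ∧ (∀ v w : H, ⟪P v, w⟫_ℂ = ⟪v, P w⟫_ℂ) ∧ Set.range P = S

/-- The two covariance relations for a Gabor-type kernel on `ℤ²`. -/
def GaborCovariant (lam : ℂ) (K : ℤ × ℤ → ℤ × ℤ → ℂ) : Prop :=
  (∀ m n m' n' : ℤ, K (m + 1, n) (m' + 1, n') = K (m, n) (m', n')) ∧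
  (∀ m n m' n' : ℤ, K (m, n + 1) (m', n' + 1) = lam ^ (m - m') * K (m, n) (m', n'))

/-- The vectors `U^m V^n ξ₀` of a Gabor type unitary system. -/
def gaborVec {H : Type*} [NormedAddCommGroup H] [InnerProductSpace ℂ H] [CompleteSpace H]
    (U V : unitary (H →L[ℂ] H)) (ξ₀ : H) (p : ℤ × ℤ) : H :=
  ((U ^ p.1 * V ^ p.2 : unitary (H →L[ℂ] H)) : H →L[ℂ] H) ξ₀

/-- `(H, U, V, ξ₀)` is the Gabor type cyclic system associated to the kernel `K` and the
unimodular scalar `lam` : `U V = lam V U`, the vectors `U^m V^n ξ₀` span a dense subspace,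
and their inner products reproduce `K`. -/
def IsGaborSystem {H : Type*} [NormedAddCommGroup H] [InnerProductSpace ℂ H] [CompleteSpace H]
    (lam : ℂ) (K : ℤ × ℤ → ℤ × ℤ → ℂ) (U V : unitary (H →L[ℂ] H)) (ξ₀ : H) : Prop :=
  ((U : H →L[ℂ] H) * (V : H →L[ℂ] H) = lam • ((V : H →L[ℂ] H) * (U : H →L[ℂ] H))) ∧
  Dense (↑(Submodule.span ℂ (Set.range (gaborVec U V ξ₀))) : Set H) ∧
  ∀ m n m' n' : ℤ,
    ⟪gaborVec U V ξ₀ (m', n'), gaborVec U V ξ₀ (m, n)⟫_ℂ = K (m, n) (m', n')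

universe u

namespace GNS

variable {A : Type u} [NormedRing A] [StarRing A] [CStarRing A]
    [NormedAlgebra ℂ A] [StarModule ℂ A] [CompleteSpace A]

/-- A positive linear functional bundled with its positivity property. -/
structure Data (A : Type u) [NormedRing A] [StarRing A] [CStarRing A]
    [NormedAlgebra ℂ A] [StarModule ℂ A] [CompleteSpace A] : Type u where
  φ : A →ₗ[ℂ] ℂ
  pos : ∀ x : A, 0 ≤ φ (star x * x)

variable (p : Data A)

lemma Data.conj_eq (x : A) : (starRingEnd ℂ) (p.φ (star x * x)) = p.φ (star x * x) := by
  have h := p.pos x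
  rw [Complex.le_def] at h
  exact Complex.conj_eq_iff_im.mpr (by simpa using h.2.symm)

lemma Data.conj_eq_sa {a : A} (ha : star a = a) :
    (starRingEnd ℂ) (p.φ a) = p.φ a := by
  have e : star (1 + a) * (1 + a) - star (1 - a) * (1 - a) = a + a + (a + a) := by
    rw [star_add, star_one, ha, star_sub, star_one, ha]
    noncomm_ring
  have h4 : p.φ (star (1 + a) * (1 + a)) - p.φ (star (1 - a) * (1 - a))
      = p.φ a + p.φ a + (p.φ a + p.φ a) := by
    rw [← map_sub, e]; simp [map_add]
  have h5 : (starRingEnd ℂ) (p.φ a + p.φ a + (p.φ a + p.φ a))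
      = p.φ a + p.φ a + (p.φ a + p.φ a) := by
    rw [← h4, map_sub, p.conj_eq, p.conj_eq]
  simp only [map_add] at h5
  have h6 : (starRingEnd ℂ) (p.φ a) * 4 = p.φ a * 4 := by linear_combination h5
  exact mul_right_cancel₀ (by norm_num) h6

lemma Data.map_star (w : A) : p.φ (star w) = (starRingEnd ℂ) (p.φ w) := by
  set a : A := w + star w with hadef
  set b : A := Complex.I • (w - star w) with hbdef
  have ha : star a = a := by simp [hadef, star_add, add_comm]
  have hb : star b = b := by
    rw [hbdef, star_smul, star_sub, star_star, Complex.star_def, Complex.conj_I]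
    module
  have hIb : Complex.I • b = star w - w := by
    rw [hbdef, smul_smul, Complex.I_mul_I, neg_one_smul, neg_sub]
  have hw : w = (2⁻¹ : ℂ) • (a - Complex.I • b) := by
    rw [hIb, hadef]; module
  have hsw : star w = (2⁻¹ : ℂ) • (a + Complex.I • b) := by
    rw [hIb, hadef]; module
  have h1 : p.φ (star w) = 2⁻¹ * p.φ a + 2⁻¹ * (Complex.I * p.φ b) := by
    conv_lhs => rw [hsw]
    simp [map_add, map_smul, smul_eq_mul, mul_add]
  have h2 : p.φ w = 2⁻¹ * p.φ a - 2⁻¹ * (Complex.I * p.φ b) := by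
    conv_lhs => rw [hw]
    simp [map_sub, map_smul, smul_eq_mul, mul_sub]
  rw [h1, h2, map_sub, map_mul, map_mul, map_mul, Complex.conj_I,
    p.conj_eq_sa ha, p.conj_eq_sa hb, map_inv₀, map_ofNat]
  ring

lemma Data.bound (a x : A) :
    (p.φ (star (a * x) * (a * x))).re ≤ ‖a‖ ^ 2 * (p.φ (star x * x)).re := by
  letI : CStarAlgebra A :=
    { toNormedRing := ‹_›, toStarRing := ‹_›, toCStarRing := ‹_›,
      toNormedAlgebra := ‹_›, toStarModule := ‹_›, toCompleteSpace := ‹_› }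
  letI := CStarAlgebra.spectralOrder A
  haveI := CStarAlgebra.spectralOrderedRing A
  have h1 : star a * a ≤ algebraMap ℝ A (‖a‖ ^ 2) :=
    CStarAlgebra.star_mul_le_algebraMap_norm_sq
  set c : A := algebraMap ℝ A (‖a‖ ^ 2) - star a * a with hc
  have hc0 : (0 : A) ≤ c := sub_nonneg.mpr h1
  set s : A := CFC.sqrt c with hs
  have hss : s * s = c := CFC.sqrt_mul_sqrt_self c hc0
  have hsa : star s = s := (IsSelfAdjoint.of_nonneg (CFC.sqrt_nonneg c)).star_eq
  have h3 : star (s * x) * (s * x) = star x * c * x := by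
    rw [star_mul, hsa, mul_assoc, ← mul_assoc s s x, hss, ← mul_assoc]
  have halg : star x * algebraMap ℝ A (‖a‖ ^ 2) * x
      = ((‖a‖ ^ 2 : ℝ) : ℂ) • (star x * x) := by
    rw [IsScalarTower.algebraMap_apply ℝ ℂ A, Algebra.algebraMap_eq_smul_one,
      mul_smul_comm, smul_mul_assoc, mul_one, Complex.coe_algebraMap]
  have h4 : star x * c * x
      = ((‖a‖ ^ 2 : ℝ) : ℂ) • (star x * x) - star (a * x) * (a * x) := by
    rw [hc, mul_sub, sub_mul, halg]
    congr 1
    rw [star_mul, mul_assoc, mul_assoc, mul_assoc]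
  have h2 := p.pos (s * x)
  rw [h3, h4, map_sub, map_smul] at h2
  rw [Complex.le_def] at h2
  have := h2.1
  simp only [Complex.zero_re, Complex.sub_re, Complex.smul_re] at this
  have hre : (((‖a‖ ^ 2 : ℝ) : ℂ) • p.φ (star x * x)).re
      = ‖a‖ ^ 2 * (p.φ (star x * x)).re := by
    rw [smul_eq_mul, Complex.re_ofReal_mul]
  have h7 : (0:ℝ) ≤ (((‖a‖ ^ 2 : ℝ) : ℂ) • p.φ (star x * x)).re
      - (p.φ (star (a * x) * (a * x))).re := by
    simpa using h2.1
  rw [hre] at h7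
  linarith

/-- The type synonym carrying the GNS pre-inner-product structure. -/
def Pre (_p : Data A) : Type u := A

/-- Interpret an element of the synonym as an element of `A`. -/
def Pre.val {p : Data A} (x : Pre p) : A := x

/-- Interpret an element of `A` in the synonym. -/
def Pre.mk (p : Data A) (x : A) : Pre p := x

instance : AddCommGroup (Pre p) := inferInstanceAs (AddCommGroup A)
instance : Module ℂ (Pre p) := inferInstanceAs (Module ℂ A)

instance : Inner ℂ (Pre p) := ⟨fun x y => p.φ (star x.val * y.val)⟩

lemma Pre.inner_def (x y : Pre p) : ⟪x, y⟫_ℂ = p.φ (star x.val * y.val) := rfl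

/-- The GNS pre-inner-product core. -/
def core : PreInnerProductSpace.Core ℂ (Pre p) where
  inner x y := ⟪x, y⟫_ℂ
  conj_inner_symm x y := by
    rw [Pre.inner_def, Pre.inner_def, ← p.map_star, star_mul, star_star]
  re_inner_nonneg x := by
    have h := p.pos x.val
    rw [Complex.le_def] at h
    simpa [Pre.inner_def] using h.1
  add_left x y z := by
    simp only [Pre.inner_def]
    rw [show (x + y).val = x.val + y.val from rfl, star_add, add_mul, map_add]
  smul_left x y r := by
    simp only [Pre.inner_def]
    rw [show (r • x).val = r • x.val from rfl, star_smul, smul_mul_assoc, map_smul,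
      smul_eq_mul, Complex.star_def]

instance : SeminormedAddCommGroup (Pre p) :=
  InnerProductSpace.Core.toSeminormedAddCommGroup (𝕜 := ℂ) (c := core p)

instance : NormedSpace ℂ (Pre p) :=
  InnerProductSpace.Core.toNormedSpace (𝕜 := ℂ) (c := core p)

instance : InnerProductSpace ℂ (Pre p) :=
  { (inferInstance : NormedSpace ℂ (Pre p)), (inferInstance : Inner ℂ (Pre p)) with
    norm_sq_eq_re_inner := fun x => by
      have h : ‖x‖ = Real.sqrt (RCLike.re ⟪x, x⟫_ℂ) := rfl
      have h2 : (0:ℝ) ≤ RCLike.re ⟪x, x⟫_ℂ := (core p).re_inner_nonneg x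
      rw [h, Real.sq_sqrt h2]
    conj_inner_symm := (core p).conj_inner_symm
    add_left := (core p).add_left
    smul_left := (core p).smul_left }

lemma Pre.norm_le (a : A) (x : Pre p) :
    ‖Pre.mk p (a * x.val)‖ ≤ ‖a‖ * ‖x‖ := by
  have hb := p.bound a x.val
  have h1 : ‖Pre.mk p (a * x.val)‖
      = Real.sqrt ((p.φ (star (a * x.val) * (a * x.val))).re) := rfl
  have h2 : ‖x‖ = Real.sqrt ((p.φ (star x.val * x.val)).re) := rfl
  rw [h1, h2]
  calc Real.sqrt ((p.φ (star (a * x.val) * (a * x.val))).re)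
      ≤ Real.sqrt (‖a‖ ^ 2 * (p.φ (star x.val * x.val)).re) := Real.sqrt_le_sqrt hb
    _ = ‖a‖ * Real.sqrt ((p.φ (star x.val * x.val)).re) := by
        rw [Real.sqrt_mul (sq_nonneg _), Real.sqrt_sq (norm_nonneg a)]

/-- Left multiplication by `a` as a linear map on the synonym. -/
def mulPre (a : A) : Pre p →ₗ[ℂ] Pre p where
  toFun x := Pre.mk p (a * x.val)
  map_add' x y := by
    show Pre.mk p (a * (x.val + y.val)) = Pre.mk p (a * x.val) + Pre.mk p (a * y.val)
    show a * (x.val + y.val) = a * x.val + a * y.val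
    rw [mul_add]
  map_smul' r x := by
    show Pre.mk p (a * (r • x.val)) = r • Pre.mk p (a * x.val)
    show a * (r • x.val) = r • (a * x.val)
    rw [mul_smul_comm]

/-- Left multiplication as a continuous linear map. -/
def mulCLM (a : A) : Pre p →L[ℂ] Pre p :=
  (mulPre p a).mkContinuous ‖a‖ (fun x => Pre.norm_le p a x)

/-- The GNS Hilbert space. -/
def Hsp (p : Data A) : Type u :=
  UniformSpace.Completion (SeparationQuotient (Pre p))

instance : NormedAddCommGroup (Hsp p) :=
  inferInstanceAs (NormedAddCommGroup (UniformSpace.Completion (SeparationQuotient (Pre p))))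
instance : InnerProductSpace ℂ (Hsp p) :=
  inferInstanceAs (InnerProductSpace ℂ (UniformSpace.Completion (SeparationQuotient (Pre p))))
instance : CompleteSpace (Hsp p) :=
  inferInstanceAs (CompleteSpace (UniformSpace.Completion (SeparationQuotient (Pre p))))

/-- The canonical map into the GNS Hilbert space. -/
def j : Pre p →L[ℂ] Hsp p :=
  (UniformSpace.Completion.toComplL (𝕜 := ℂ)
    (E := SeparationQuotient (Pre p))).comp (SeparationQuotient.mkCLM ℂ (Pre p))

lemma j_apply (x : Pre p) :
    j p x = ((SeparationQuotient.mk x : SeparationQuotient (Pre p)) :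
      UniformSpace.Completion (SeparationQuotient (Pre p))) := rfl

lemma denseRange_j : DenseRange (j p) := by
  have h : ⇑(j p) = ((↑) : SeparationQuotient (Pre p) →
      UniformSpace.Completion (SeparationQuotient (Pre p))) ∘ SeparationQuotient.mk := rfl
  exact UniformSpace.Completion.denseRange_coe.comp SeparationQuotient.surjective_mk.denseRange
    (UniformSpace.Completion.continuous_coe _)

lemma inner_j (x y : Pre p) : ⟪j p x, j p y⟫_ℂ = p.φ (star x.val * y.val) := by
  show ⟪((SeparationQuotient.mk x : SeparationQuotient (Pre p)) :
      UniformSpace.Completion (SeparationQuotient (Pre p))),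
    ((SeparationQuotient.mk y : SeparationQuotient (Pre p)) :
      UniformSpace.Completion (SeparationQuotient (Pre p)))⟫_ℂ = _
  rw [UniformSpace.Completion.inner_coe,
    SeparationQuotient.inner_mk_mk, Pre.inner_def]

/-- The GNS operator on the separation quotient. -/
def opQ (a : A) : SeparationQuotient (Pre p) →L[ℂ] SeparationQuotient (Pre p) :=
  (SeparationQuotient.mkCLM ℂ (Pre p)).comp
    ((mulCLM p a).comp (SeparationQuotient.outCLM ℂ (Pre p)))

lemma opQ_mk (a : A) (x : Pre p) :
    opQ p a (SeparationQuotient.mk x) = SeparationQuotient.mk (mulCLM p a x) := by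
  show SeparationQuotient.mk
      (mulCLM p a (SeparationQuotient.outCLM ℂ (Pre p) (SeparationQuotient.mk x)))
    = SeparationQuotient.mk (mulCLM p a x)
  rw [SeparationQuotient.mk_eq_mk]
  exact Inseparable.map
    (SeparationQuotient.mk_eq_mk.mp (SeparationQuotient.mk_outCLM ℂ _))
    (mulCLM p a).continuous

lemma isUniformInducing_coeQ :
    IsUniformInducing ((UniformSpace.Completion.toComplL (𝕜 := ℂ)
      (E := SeparationQuotient (Pre p))) :
        SeparationQuotient (Pre p) →L[ℂ] Hsp p) :=
  UniformSpace.Completion.isUniformInducing_coe _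

lemma denseRange_coeQ :
    DenseRange ((UniformSpace.Completion.toComplL (𝕜 := ℂ)
      (E := SeparationQuotient (Pre p))) :
        SeparationQuotient (Pre p) →L[ℂ] Hsp p) :=
  UniformSpace.Completion.denseRange_coe

/-- The GNS representation operator for `a : A`. -/
def op (a : A) : Hsp p →L[ℂ] Hsp p :=
  ContinuousLinearMap.extend
    ((UniformSpace.Completion.toComplL (𝕜 := ℂ)
      (E := SeparationQuotient (Pre p))).comp (opQ p a))
    (UniformSpace.Completion.toComplL (𝕜 := ℂ) (E := SeparationQuotient (Pre p)))


lemma op_j (a : A) (x : Pre p) : op p a (j p x) = j p (Pre.mk p (a * x.val)) := by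
  have h1 : op p a (j p x)
      = (UniformSpace.Completion.toComplL (𝕜 := ℂ)
          (E := SeparationQuotient (Pre p))) (opQ p a (SeparationQuotient.mk x)) :=
    ContinuousLinearMap.extend_eq _ (denseRange_coeQ p) (isUniformInducing_coeQ p) (SeparationQuotient.mk x)
  rw [h1, opQ_mk]
  rfl

lemma op_ext {S T : Hsp p →L[ℂ] Hsp p}
    (h : ∀ x : Pre p, S (j p x) = T (j p x)) : S = T :=
  ContinuousLinearMap.coeFn_injective <|
    (denseRange_j p).equalizer S.continuous T.continuous (funext h)

lemma op_adjoint (a : A) (ξ η : Hsp p) :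
    ⟪op p (star a) ξ, η⟫_ℂ = ⟪ξ, op p a η⟫_ℂ := by
  refine (denseRange_j p).induction_on₂ (p := fun ξ η =>
    ⟪op p (star a) ξ, η⟫_ℂ = ⟪ξ, op p a η⟫_ℂ) ?_ (fun x y => ?_) ξ η
  · exact isClosed_eq
      (((op p (star a)).continuous.comp continuous_fst).inner continuous_snd)
      (continuous_fst.inner ((op p a).continuous.comp continuous_snd))
  · show ⟪op p (star a) (j p x), j p y⟫_ℂ = ⟪j p x, op p a (j p y)⟫_ℂ
    rw [op_j, op_j, inner_j, inner_j]
    show p.φ (star (star a * x.val) * y.val) = p.φ (star x.val * (a * y.val))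
    rw [star_mul, star_star, mul_assoc]

/-- The GNS representation. -/
def rep : A →⋆ₐ[ℂ] (Hsp p →L[ℂ] Hsp p) where
  toFun := op p
  map_one' := op_ext p fun x => by
    rw [op_j]
    show j p (Pre.mk p (1 * x.val)) = j p x
    rw [show Pre.mk p (1 * x.val) = x from one_mul x.val]
  map_mul' a b := op_ext p fun x => by
    show op p (a * b) (j p x) = (op p a) ((op p b) (j p x))
    rw [op_j, op_j, op_j]
    show j p (Pre.mk p (a * b * x.val)) = j p (Pre.mk p (a * (b * x.val)))
    rw [mul_assoc]
  map_zero' := op_ext p fun x => by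
    rw [op_j]
    show j p (Pre.mk p (0 * x.val)) = (0 : Hsp p →L[ℂ] Hsp p) (j p x)
    rw [show Pre.mk p (0 * x.val) = (0 : Pre p) from zero_mul x.val]
    simp
  map_add' a b := op_ext p fun x => by
    show op p (a + b) (j p x) = op p a (j p x) + op p b (j p x)
    rw [op_j, op_j, op_j]
    rw [show Pre.mk p ((a + b) * x.val)
        = Pre.mk p (a * x.val) + Pre.mk p (b * x.val) from add_mul a b x.val]
    exact map_add (j p) _ _
  commutes' c := op_ext p fun x => by
    rw [op_j]
    show j p (Pre.mk p (algebraMap ℂ A c * x.val))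
      = (algebraMap ℂ (Hsp p →L[ℂ] Hsp p) c) (j p x)
    rw [show Pre.mk p (algebraMap ℂ A c * x.val) = c • x by
      show algebraMap ℂ A c * x.val = c • x.val
      rw [Algebra.algebraMap_eq_smul_one, smul_mul_assoc, one_mul]]
    rw [map_smul]
    simp [Algebra.algebraMap_eq_smul_one]
  map_star' a := by
    rw [ContinuousLinearMap.star_eq_adjoint]
    exact (ContinuousLinearMap.eq_adjoint_iff _ _).mpr (op_adjoint p a)

end GNS


/-- **The GNS construction.** A positive linear functional on a unital C*-algebra admits a
cyclic star-representation whose vector state is the functional. -/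
theorem gns_construction {A : Type u} [NormedRing A] [StarRing A] [CStarRing A]
    [NormedAlgebra ℂ A] [StarModule ℂ A] [CompleteSpace A]
    (φ : A →ₗ[ℂ] ℂ) (hφ : ∀ x : A, 0 ≤ φ (star x * x)) :
    ∃ (H : Type u) (_ : NormedAddCommGroup H) (_ : InnerProductSpace ℂ H)
      (_ : CompleteSpace H) (π : A →⋆ₐ[ℂ] (H →L[ℂ] H)) (ξ₀ : H),
      Dense (↑(Submodule.span ℂ (Set.range fun x : A => π x ξ₀)) : Set H) ∧
        ∀ x : A, ⟪ξ₀, π x ξ₀⟫_ℂ = φ x := by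
  let p : GNS.Data A := ⟨φ, hφ⟩
  have hact : ∀ x : A, GNS.rep p x (GNS.j p (GNS.Pre.mk p 1)) = GNS.j p (GNS.Pre.mk p x) := by
    intro x
    show GNS.op p x (GNS.j p (GNS.Pre.mk p 1)) = _
    rw [GNS.op_j]
    congr 1
    show x * (1 : A) = x
    rw [mul_one]
  refine ⟨GNS.Hsp p, inferInstance, inferInstance, inferInstance, GNS.rep p,
    GNS.j p (GNS.Pre.mk p 1), ?_, ?_⟩
  · have hrange : (Set.range fun x : A => GNS.rep p x (GNS.j p (GNS.Pre.mk p 1)))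
        = Set.range (GNS.j p) := by
      rw [funext hact]
      exact Function.Surjective.range_comp (fun y => ⟨y, rfl⟩) (GNS.j p)
    have hdense : Dense (Set.range fun x : A => GNS.rep p x (GNS.j p (GNS.Pre.mk p 1))) := by
      rw [hrange]; exact GNS.denseRange_j p
    exact hdense.mono Submodule.subset_span
  · intro x
    rw [hact x, GNS.inner_j]
    show p.φ (star (1 : A) * x) = φ x
    rw [star_one, one_mul]
end
end

section
/- Let G be a group and let K : G × G → ℂ be a group positive definite map, i.e., K is positive definite and K(x,y) = K(zx, zy) for all x, y, z ∈ G. Then there exists a complex Hilbert space H_K, a unitary representation π_K of G on H_K, and a vector ξ₀ ∈ H_K which is cyclic (the linear span of {π_K(x)ξ₀ : x ∈ G} is dense in H_K) such that ⟨π_K(x)ξ₀, π_K(y)ξ₀⟩ = K(x,y) for all x, y ∈ G. -/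
open scoped InnerProductSpace ComplexOrder Classical
open Complex

noncomputable section

namespace GpdAux



/-- The sesquilinear form on finitely supported functions, conjugate-linear in `f`. -/
def kInner {X : Type*} (K : X → X → ℂ) (f g : X →₀ ℂ) : ℂ :=
  g.sum fun x b => f.sum fun y a => K x y * b * (starRingEnd ℂ) a

theorem kInner_add_left {X : Type*} (K : X → X → ℂ) (f f' g : X →₀ ℂ) :
    kInner K (f + f') g = kInner K f g + kInner K f' g := by
  unfold kInner
  rw [← Finsupp.sum_add]
  exact Finsupp.sum_congr fun x _ =>
    Finsupp.sum_add_index' (fun y => by simp) (fun y a a' => by rw [map_add]; ring)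

theorem kInner_smul_left {X : Type*} (K : X → X → ℂ) (r : ℂ) (f g : X →₀ ℂ) :
    kInner K (r • f) g = (starRingEnd ℂ) r * kInner K f g := by
  unfold kInner
  rw [Finsupp.mul_sum]
  refine Finsupp.sum_congr fun x _ => ?_
  rw [Finsupp.sum_smul_index' (fun y => by simp), Finsupp.mul_sum]
  exact Finsupp.sum_congr fun y _ => by
    rw [smul_eq_mul, map_mul]; ring

theorem kInner_conj {X : Type*} (K : X → X → ℂ)
    (hherm : ∀ x y, (starRingEnd ℂ) (K x y) = K y x) (f g : X →₀ ℂ) :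
    (starRingEnd ℂ) (kInner K f g) = kInner K g f := by
  unfold kInner
  rw [map_finsuppSum, Finsupp.sum_comm f g]
  refine Finsupp.sum_congr fun x _hx => ?_
  rw [map_finsuppSum]
  refine Finsupp.sum_congr fun y _hy => ?_
  rw [map_mul, map_mul, Complex.conj_conj, hherm]
  ring

theorem herm_of_posdef {X : Type*} (K : X → X → ℂ) (hK : IsPosDefKernel K) (x y : X) :
    (starRingEnd ℂ) (K x y) = K y x := by
  have hdiag : ∀ z : X, (K z z).im = 0 := by
    intro z
    have h := hK 1 ![z] ![1]
    simp only [Fin.sum_univ_one, Matrix.cons_val_zero, map_one, mul_one] at h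
    simpa using (Complex.le_def.mp h).2.symm
  have h1 := hK 2 ![x, y] ![1, 1]
  have h2 := hK 2 ![x, y] ![1, Complex.I]
  simp only [Fin.sum_univ_two, Matrix.cons_val_zero, Matrix.cons_val_one, Matrix.head_cons,
    map_one, mul_one, one_mul, Complex.conj_I] at h1 h2
  have h1' := (Complex.le_def.mp h1).2.symm
  have h2' := (Complex.le_def.mp h2).2.symm
  have hx := hdiag x
  have hy := hdiag y
  apply Complex.ext <;>
    simp only [Complex.add_im, Complex.mul_im, Complex.mul_re, Complex.conj_re, Complex.conj_im,
      Complex.I_re, Complex.I_im, Complex.neg_re, Complex.neg_im, Complex.zero_im,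
      mul_zero, mul_one, zero_mul, mul_neg, neg_zero, add_zero, zero_add] at h1' h2' ⊢ <;>
    linarith

theorem kInner_self_nonneg {X : Type*} (K : X → X → ℂ) (hK : IsPosDefKernel K) (f : X →₀ ℂ) :
    0 ≤ kInner K f f := by
  classical
  set s := f.support with hs
  let e := s.equivFin
  have h := hK s.card (fun i => (e.symm i : X)) (fun i => f (e.symm i))
  have key : kInner K f f
      = ∑ i, ∑ j, K ((e.symm i : X)) ((e.symm j : X)) * f (e.symm i) *
          (starRingEnd ℂ) (f (e.symm j)) := by
    show (∑ x ∈ s, ∑ y ∈ s, K x y * f x * (starRingEnd ℂ) (f y)) = _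
    rw [← Finset.sum_coe_sort s, ← Equiv.sum_comp e.symm]
    refine Finset.sum_congr rfl fun i _ => ?_
    rw [← Finset.sum_coe_sort s, ← Equiv.sum_comp e.symm]
  rw [key]
  exact h

theorem kInner_single {X : Type*} (K : X → X → ℂ) (x y : X) :
    kInner K (Finsupp.single y 1) (Finsupp.single x 1) = K x y := by
  unfold kInner
  rw [Finsupp.sum_single_index (by simp), Finsupp.sum_single_index (by simp)]
  simp

theorem kInner_equiv {G : Type*} [Group G] (K : G → G → ℂ)
    (hinv : ∀ x y z : G, K x y = K (z * x) (z * y)) (g : G) (f h : G →₀ ℂ) :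
    kInner K (Finsupp.equivMapDomain (Equiv.mulLeft g) f)
      (Finsupp.equivMapDomain (Equiv.mulLeft g) h) = kInner K f h := by
  unfold kInner
  rw [Finsupp.sum_equivMapDomain]
  refine Finsupp.sum_congr fun x _ => ?_
  rw [Finsupp.sum_equivMapDomain]
  refine Finsupp.sum_congr fun y _ => ?_
  simp only [Equiv.coe_mulLeft]
  rw [← hinv]


open UniformSpace UniformSpace.Completion

variable {E : Type*} [SeminormedAddCommGroup E] [NormedSpace ℂ E]

/-- Extend a linear isometry equivalence to the completion. -/
def liec (e : E ≃ₗᵢ[ℂ] E) : Completion E ≃ₗᵢ[ℂ] Completion E where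
  toLinearEquiv :=
    { toFun := Completion.map e
      invFun := Completion.map e.symm
      map_add' := fun a b => by
        refine Completion.induction_on₂ a b ?_ ?_
        · exact isClosed_eq (continuous_map.comp (continuous_fst.add continuous_snd))
            (Continuous.add (f := fun x : Completion E × Completion E => Completion.map e x.1)
              (g := fun x : Completion E × Completion E => Completion.map e x.2)
              (continuous_map.comp continuous_fst) (continuous_map.comp continuous_snd))
        · intro a b
          rw [← Completion.coe_add, map_coe e.isometry.uniformContinuous,
            map_coe e.isometry.uniformContinuous, map_coe e.isometry.uniformContinuous,
            ← Completion.coe_add, e.map_add]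
      map_smul' := fun c a => by
        refine Completion.induction_on a ?_ ?_
        · exact isClosed_eq (continuous_map.comp (continuous_const_smul c))
            ((continuous_const_smul c).comp continuous_map)
        · intro a
          rw [ ← Completion.coe_smul, map_coe e.isometry.uniformContinuous,
            map_coe e.isometry.uniformContinuous, ← Completion.coe_smul, e.map_smul, RingHom.id_apply]
      left_inv := fun a => by
        refine Completion.induction_on a ?_ ?_
        · exact isClosed_eq (continuous_map.comp continuous_map) continuous_id
        · intro a
          rw [map_coe e.isometry.uniformContinuous, map_coe e.symm.isometry.uniformContinuous,
            e.symm_apply_apply]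
      right_inv := fun a => by
        refine Completion.induction_on a ?_ ?_
        · exact isClosed_eq (continuous_map.comp continuous_map) continuous_id
        · intro a
          rw [map_coe e.symm.isometry.uniformContinuous, map_coe e.isometry.uniformContinuous,
            e.apply_symm_apply] }
  norm_map' := fun a => by
    refine Completion.induction_on a ?_ ?_
    · exact isClosed_eq (continuous_norm.comp continuous_map) continuous_norm
    · intro a
      show ‖Completion.map (⇑e) (a : Completion E)‖ = _
      rw [map_coe e.isometry.uniformContinuous, Completion.norm_coe, Completion.norm_coe,
        e.norm_map]

@[simp] theorem liec_coe (e : E ≃ₗᵢ[ℂ] E) (a : E) : liec e (a : Completion E) = (e a : Completion E) :=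
  map_coe e.isometry.uniformContinuous a

theorem liec_continuous (e : E ≃ₗᵢ[ℂ] E) : Continuous (liec e) := continuous_map

end GpdAux

universe u

/-- A group positive definite map induces a cyclic unitary representation of the group. -/
theorem group_posdef_gives_unitary_rep {G : Type u} [Group G] (K : G → G → ℂ)
    (hK : IsPosDefKernel K) (hinv : ∀ x y z : G, K x y = K (z * x) (z * y)) :
    ∃ (H : Type u) (_ : NormedAddCommGroup H) (_ : InnerProductSpace ℂ H)
      (_ : CompleteSpace H) (π : G →* (H ≃ₗᵢ[ℂ] H)) (ξ₀ : H),
      Dense (↑(Submodule.span ℂ (Set.range fun g : G => π g ξ₀)) : Set H) ∧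
        ∀ x y : G, ⟪π y ξ₀, π x ξ₀⟫_ℂ = K x y := by
  classical
  have hherm := GpdAux.herm_of_posdef K hK
  letI core : PreInnerProductSpace.Core ℂ (G →₀ ℂ) :=
    { inner := GpdAux.kInner K
      conj_inner_symm := fun f g => GpdAux.kInner_conj K hherm g f
      re_inner_nonneg := fun f => by
        simpa using (Complex.le_def.mp (GpdAux.kInner_self_nonneg K hK f)).1
      add_left := fun f f' g => GpdAux.kInner_add_left K f f' g
      smul_left := fun f g r => GpdAux.kInner_smul_left K r f g }
  letI : SeminormedAddCommGroup (G →₀ ℂ) := InnerProductSpace.Core.toSeminormedAddCommGroup (𝕜 := ℂ) (F := G →₀ ℂ)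
  letI : NormedSpace ℂ (G →₀ ℂ) := InnerProductSpace.Core.toNormedSpace (𝕜 := ℂ) (F := G →₀ ℂ)
  letI : InnerProductSpace ℂ (G →₀ ℂ) :=
    { core with
      norm_sq_eq_re_inner := fun f => by
        have h : ‖f‖ = Real.sqrt (RCLike.re (GpdAux.kInner K f f)) := rfl
        rw [h]; exact Real.sq_sqrt (core.re_inner_nonneg f) }
  have hnorm : ∀ f : G →₀ ℂ, ‖f‖ = Real.sqrt (RCLike.re (GpdAux.kInner K f f)) := fun _ => rfl
  let pre : G → ((G →₀ ℂ) ≃ₗᵢ[ℂ] (G →₀ ℂ)) := fun g =>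
    { toLinearEquiv := Finsupp.domLCongr (Equiv.mulLeft g)
      norm_map' := fun f => by
        rw [hnorm, hnorm]
        congr 2
        simpa [Finsupp.domLCongr_apply] using GpdAux.kInner_equiv K hinv g f f }
  have hpre : ∀ (g : G) (v : G →₀ ℂ),
      pre g v = Finsupp.equivMapDomain (Equiv.mulLeft g) v := fun g v => by
    simp [pre, Finsupp.domLCongr_apply]
  have hcomp : ∀ (a b : G) (v : G →₀ ℂ), pre (a * b) v = pre a (pre b v) := by
    intro a b v
    rw [hpre, hpre, hpre]
    rw [show Equiv.mulLeft (a * b) = (Equiv.mulLeft b).trans (Equiv.mulLeft a) from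
      Equiv.ext fun t => mul_assoc a b t]
    rw [Finsupp.equivMapDomain_trans]
  have hmul : ∀ a b : G,
      GpdAux.liec (pre (a * b)) = GpdAux.liec (pre a) * GpdAux.liec (pre b) := by
    intro a b
    ext ξ
    simp only [LinearIsometryEquiv.coe_mul, Function.comp_apply]
    refine UniformSpace.Completion.induction_on ξ ?_ ?_
    · exact isClosed_eq (GpdAux.liec_continuous _)
        ((GpdAux.liec_continuous _).comp (GpdAux.liec_continuous _))
    · intro v
      rw [GpdAux.liec_coe, GpdAux.liec_coe, GpdAux.liec_coe, hcomp]
  set ξ₀ : UniformSpace.Completion (G →₀ ℂ) := ((Finsupp.single (1 : G) (1 : ℂ) : G →₀ ℂ) :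
    UniformSpace.Completion (G →₀ ℂ)) with hξ₀
  have happly : ∀ g : G, (GpdAux.liec (pre g)) ξ₀
      = ((Finsupp.single g (1 : ℂ) : G →₀ ℂ) : UniformSpace.Completion (G →₀ ℂ)) := by
    intro g
    rw [hξ₀, GpdAux.liec_coe]
    congr 1
    rw [hpre, Finsupp.equivMapDomain_single]
    simp
  refine ⟨UniformSpace.Completion (G →₀ ℂ), inferInstance, inferInstance, inferInstance,
    MonoidHom.mk' (fun g => GpdAux.liec (pre g)) hmul, ξ₀, ?_, ?_⟩
  · have hr : (Set.range fun g : G =>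
        (MonoidHom.mk' (fun g => GpdAux.liec (pre g)) hmul) g ξ₀)
        = ((↑) : (G →₀ ℂ) → UniformSpace.Completion (G →₀ ℂ)) ''
          Set.range (fun g : G => Finsupp.single g (1 : ℂ)) := by
      rw [show (fun g : G => (MonoidHom.mk' (fun g => GpdAux.liec (pre g)) hmul) g ξ₀)
          = (((↑) : (G →₀ ℂ) → UniformSpace.Completion (G →₀ ℂ)) ∘
            fun g : G => Finsupp.single g (1 : ℂ)) from funext fun g => happly g]
      exact Set.range_comp _ _
    have htop : Submodule.span ℂ (Set.range fun g : G => Finsupp.single g (1 : ℂ)) = ⊤ := by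
      have hb : Set.range (fun g : G => Finsupp.single g (1 : ℂ))
          = Set.range ⇑(Finsupp.basisSingleOne (R := ℂ) (ι := G)) := by
        rw [Finsupp.coe_basisSingleOne]
      rw [hb, Module.Basis.span_eq]
    have hsp : (Submodule.span ℂ (Set.range fun g : G =>
        (MonoidHom.mk' (fun g => GpdAux.liec (pre g)) hmul) g ξ₀) :
          Set (UniformSpace.Completion (G →₀ ℂ)))
        = Set.range ((↑) : (G →₀ ℂ) → UniformSpace.Completion (G →₀ ℂ)) := by
      rw [hr, show (((↑) : (G →₀ ℂ) → UniformSpace.Completion (G →₀ ℂ)) ''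
            Set.range (fun g : G => Finsupp.single g (1 : ℂ)))
          = ⇑(UniformSpace.Completion.toComplₗᵢ (𝕜 := ℂ)).toLinearMap ''
            Set.range (fun g : G => Finsupp.single g (1 : ℂ)) from rfl,
        Submodule.span_image, htop, Submodule.map_top]
      rfl
    rw [hsp]
    exact UniformSpace.Completion.denseRange_coe
  · intro x y
    show ⟪GpdAux.liec (pre y) ξ₀, GpdAux.liec (pre x) ξ₀⟫_ℂ = K x y
    rw [happly, happly, UniformSpace.Completion.inner_coe]
    exact GpdAux.kInner_single K x y
end
end

section
/- Let K and K' be positive definite maps on a nonempty set X and let c > 0. Then K' ≤ cK if and only if K'² ≤ c² K K. -/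
open scoped InnerProductSpace ComplexOrder Classical
open Complex

noncomputable section

lemma pdk_diag {X : Type*} {K : X → X → ℂ} (hK : IsPosDefKernel K) (x : X) :
    0 ≤ K x x := by
  have := hK 1 ![x] ![1]
  simpa using this

lemma pdk_herm {X : Type*} {K : X → X → ℂ} (hK : IsPosDefKernel K) (x y : X) :
    K y x = (starRingEnd ℂ) (K x y) := by
  have h1 := hK 2 ![x, y] ![1, 1]
  have h2 := hK 2 ![x, y] ![1, Complex.I]
  rw [Complex.nonneg_iff] at h1 h2
  have h1' := h1.2
  have h2' := h2.2
  have hxx := (Complex.nonneg_iff.1 (pdk_diag hK x)).2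
  have hyy := (Complex.nonneg_iff.1 (pdk_diag hK y)).2
  simp [Fin.sum_univ_two, Complex.add_im, Complex.mul_im, Complex.mul_re,
    Complex.conj_re, Complex.conj_im, Complex.I_re, Complex.I_im, ← hxx, ← hyy] at h1' h2'
  apply Complex.ext
  · simp [Complex.conj_re]; linarith
  · simp [Complex.conj_im]; linarith

lemma pdk_expand {X : Type*} {K : X → X → ℂ} (hK : IsPosDefKernel K) {m n : ℕ}
    (x : Fin m → X) (y : Fin n → X) (ξ : Fin m → ℂ) (η : Fin n → ℂ) (t : ℝ) (μ : ℂ) :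
    ∑ i, ∑ j, K (Fin.append x y i) (Fin.append x y j) *
        Fin.append ξ (fun j => (t : ℂ) * μ * η j) i *
        (starRingEnd ℂ) (Fin.append ξ (fun j => (t : ℂ) * μ * η j) j)
      = (∑ i, ∑ j, K (x i) (x j) * ξ i * (starRingEnd ℂ) (ξ j))
        + ((t : ℂ) * (starRingEnd ℂ) μ) *
            (∑ i, ∑ j, K (x i) (y j) * ξ i * (starRingEnd ℂ) (η j))
        + ((t : ℂ) * μ) *
            (starRingEnd ℂ) (∑ i, ∑ j, K (x i) (y j) * ξ i * (starRingEnd ℂ) (η j))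
        + ((t : ℂ) ^ 2 * (μ * (starRingEnd ℂ) μ)) *
            (∑ i, ∑ j, K (y i) (y j) * η i * (starRingEnd ℂ) (η j)) := by
  simp only [Fin.sum_univ_add, Fin.append_left, Fin.append_right, Finset.sum_add_distrib]
  have hB2 : ∀ (i : Fin m), ∑ j : Fin n,
      K (x i) (y j) * ξ i * (starRingEnd ℂ) ((t : ℂ) * μ * η j)
      = ((t : ℂ) * (starRingEnd ℂ) μ) * ∑ j, K (x i) (y j) * ξ i * (starRingEnd ℂ) (η j) := by
    intro i
    rw [Finset.mul_sum]
    refine Finset.sum_congr rfl fun j _ => ?_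
    simp only [map_mul, Complex.conj_ofReal]; ring
  have hB3 : ∀ (i : Fin n), ∑ j : Fin m,
      K (y i) (x j) * ((t : ℂ) * μ * η i) * (starRingEnd ℂ) (ξ j)
      = ((t : ℂ) * μ) * ∑ j, (starRingEnd ℂ) (K (x j) (y i) * ξ j * (starRingEnd ℂ) (η i)) := by
    intro i
    rw [Finset.mul_sum]
    refine Finset.sum_congr rfl fun j _ => ?_
    rw [pdk_herm hK (x j) (y i)]
    simp only [map_mul, RingHomCompTriple.comp_apply, RingHom.id_apply,
      Complex.conj_conj]; ring
  have hB4 : ∀ (i : Fin n), ∑ j : Fin n,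
      K (y i) (y j) * ((t : ℂ) * μ * η i) * (starRingEnd ℂ) ((t : ℂ) * μ * η j)
      = ((t : ℂ) ^ 2 * (μ * (starRingEnd ℂ) μ)) *
          ∑ j, K (y i) (y j) * η i * (starRingEnd ℂ) (η j) := by
    intro i
    rw [Finset.mul_sum]
    refine Finset.sum_congr rfl fun j _ => ?_
    simp only [map_mul, Complex.conj_ofReal]; ring
  simp only [hB2, hB3, hB4, ← Finset.mul_sum]
  have hc : ∑ i : Fin n, ∑ j : Fin m,
      (starRingEnd ℂ) (K (x j) (y i) * ξ j * (starRingEnd ℂ) (η i))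
      = (starRingEnd ℂ) (∑ i, ∑ j, K (x i) (y j) * ξ i * (starRingEnd ℂ) (η j)) := by
    rw [Finset.sum_comm]
    simp only [← map_sum]
  rw [hc]; ring

lemma pdk_cs {X : Type*} {K : X → X → ℂ} (hK : IsPosDefKernel K) {m n : ℕ}
    (x : Fin m → X) (y : Fin n → X) (ξ : Fin m → ℂ) (η : Fin n → ℂ) :
    ‖∑ i, ∑ j, K (x i) (y j) * ξ i * (starRingEnd ℂ) (η j)‖ ^ 2 ≤
      (∑ i, ∑ j, K (x i) (x j) * ξ i * (starRingEnd ℂ) (ξ j)).re *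
      (∑ i, ∑ j, K (y i) (y j) * η i * (starRingEnd ℂ) (η j)).re := by
  set B := ∑ i, ∑ j, K (x i) (y j) * ξ i * (starRingEnd ℂ) (η j) with hBdef
  set Qx := ∑ i, ∑ j, K (x i) (x j) * ξ i * (starRingEnd ℂ) (ξ j) with hQxdef
  set Qy := ∑ i, ∑ j, K (y i) (y j) * η i * (starRingEnd ℂ) (η j) with hQydef
  have hQx := Complex.nonneg_iff.1 (hK m x ξ)
  have hQy := Complex.nonneg_iff.1 (hK n y η)
  by_cases hB : B = 0
  · have h := mul_nonneg hQx.1 hQy.1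
    rw [hB, norm_zero, show (0:ℝ) ^ 2 = 0 by ring]
    exact h
  · have hBn : (0:ℝ) < ‖B‖ := norm_pos_iff.2 hB
    set μ : ℂ := -B / (‖B‖ : ℂ) with hμdef
    have hμB : (starRingEnd ℂ) μ * B = -(‖B‖ : ℂ) := by
      rw [hμdef]
      rw [map_div₀, map_neg, Complex.conj_ofReal, div_mul_eq_mul_div, neg_mul,
        ← Complex.normSq_eq_conj_mul_self]
      rw [Complex.normSq_eq_norm_sq]
      rw [neg_div]
      congr 1
      push_cast
      rw [sq, mul_div_assoc, div_self (by exact_mod_cast hBn.ne'), mul_one]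
    have hμ2 : μ * (starRingEnd ℂ) μ = 1 := by
      rw [Complex.mul_conj]
      norm_cast
      rw [Complex.normSq_eq_norm_sq]
      simp only [hμdef, norm_div, norm_neg, Complex.norm_real, Real.norm_eq_abs,
        abs_of_pos hBn]
      have habs : ‖B‖ ≠ 0 := by
        exact hBn.ne'
      rw [div_self habs, one_pow]
    have hquad : ∀ t : ℝ, 0 ≤ Qy.re * (t * t) + (-(2 * ‖B‖)) * t + Qx.re := by
      intro t
      have h0 := hK (m + n) (Fin.append x y) (Fin.append ξ (fun j => (t : ℂ) * μ * η j))
      rw [pdk_expand hK x y ξ η t μ] at h0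
      have h2 : μ * (starRingEnd ℂ) B = -(‖B‖ : ℂ) := by
        have := congrArg (starRingEnd ℂ) hμB
        simpa [mul_comm] using this
      have hrew : Qx + ((t : ℂ) * (starRingEnd ℂ) μ) * B + ((t : ℂ) * μ) * (starRingEnd ℂ) B
          + ((t : ℂ) ^ 2 * (μ * (starRingEnd ℂ) μ)) * Qy
          = Qx + ((Qy.re * (t * t) + (-(2 * ‖B‖)) * t : ℝ) : ℂ) := by
        have hQyr : Qy = ((Qy.re : ℝ) : ℂ) := by
          apply Complex.ext
          · simp
          · rw [Complex.ofReal_im]; exact hQy.2.symm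
        calc Qx + ((t : ℂ) * (starRingEnd ℂ) μ) * B + ((t : ℂ) * μ) * (starRingEnd ℂ) B
              + ((t : ℂ) ^ 2 * (μ * (starRingEnd ℂ) μ)) * Qy
            = Qx + (t : ℂ) * ((starRingEnd ℂ) μ * B) + (t : ℂ) * (μ * (starRingEnd ℂ) B)
              + (t : ℂ) ^ 2 * (μ * (starRingEnd ℂ) μ) * Qy := by ring
          _ = Qx + (t : ℂ) * (-(‖B‖ : ℂ)) + (t : ℂ) * (-(‖B‖ : ℂ))
              + (t : ℂ) ^ 2 * ((Qy.re : ℝ) : ℂ) := by rw [hμB, h2, hμ2, ← hQyr]; ring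
          _ = Qx + ((Qy.re * (t * t) + (-(2 * ‖B‖)) * t : ℝ) : ℂ) := by push_cast; ring
      rw [hrew] at h0
      have h3 := (Complex.nonneg_iff.1 h0).1
      simp only [Complex.add_re, Complex.ofReal_re] at h3
      linarith
    have hd := discrim_le_zero hquad
    rw [discrim] at hd
    nlinarith [hQx.1, hQy.1]

/-- For positive definite kernels `K, K'` and `c > 0`, `K' ≤ c K` iff `K'² ≤ c² K K`. -/
theorem kernelLE_iff_kernelSqLE {X : Type*} [Nonempty X] (K K' : X → X → ℂ)
    (hK : IsPosDefKernel K) (hK' : IsPosDefKernel K') (c : ℝ) (hc : 0 < c) :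
    KernelLE K' K c ↔ KernelSqLE K' K K (c ^ 2) := by
  constructor
  · intro h m n x y ξ η
    have hcs := pdk_cs hK' x y ξ η
    have hx' := Complex.nonneg_iff.1 (hK' m x ξ)
    have hy' := Complex.nonneg_iff.1 (hK' n y η)
    have hx := Complex.nonneg_iff.1 (hK m x ξ)
    have hy := Complex.nonneg_iff.1 (hK n y η)
    have h1 := (Complex.le_def.1 (h m x ξ)).1
    have h2 := (Complex.le_def.1 (h n y η)).1
    rw [Complex.mul_re, Complex.ofReal_re, Complex.ofReal_im, zero_mul, sub_zero] at h1 h2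
    calc ‖∑ i, ∑ j, K' (x i) (y j) * ξ i * (starRingEnd ℂ) (η j)‖ ^ 2
        ≤ (∑ i, ∑ j, K' (x i) (x j) * ξ i * (starRingEnd ℂ) (ξ j)).re *
            (∑ i, ∑ j, K' (y i) (y j) * η i * (starRingEnd ℂ) (η j)).re := hcs
      _ ≤ (c * (∑ i, ∑ j, K (x i) (x j) * ξ i * (starRingEnd ℂ) (ξ j)).re) *
            (c * (∑ i, ∑ j, K (y i) (y j) * η i * (starRingEnd ℂ) (η j)).re) := by
          exact mul_le_mul h1 h2 hy'.1 (mul_nonneg hc.le hx.1)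
      _ = c ^ 2 * (∑ i, ∑ j, K (x i) (x j) * ξ i * (starRingEnd ℂ) (ξ j)).re *
            (∑ i, ∑ j, K (y i) (y j) * η i * (starRingEnd ℂ) (η j)).re := by ring
  · intro h n x ξ
    have h0 := h n n x x ξ ξ
    have hq' := Complex.nonneg_iff.1 (hK' n x ξ)
    have hq := Complex.nonneg_iff.1 (hK n x ξ)
    set Q' := ∑ i, ∑ j, K' (x i) (x j) * ξ i * (starRingEnd ℂ) (ξ j) with hQ'def
    set Q := ∑ i, ∑ j, K (x i) (x j) * ξ i * (starRingEnd ℂ) (ξ j) with hQdef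
    have hnorm : ‖Q'‖ = Q'.re := by
      have : Q' = ((Q'.re : ℝ) : ℂ) := by
        apply Complex.ext
        · simp
        · rw [Complex.ofReal_im]; exact hq'.2.symm
      rw [this, Complex.norm_real, Real.norm_eq_abs, _root_.abs_of_nonneg hq'.1,
        Complex.ofReal_re]
    rw [hnorm] at h0
    have hre : Q'.re ≤ c * Q.re := by nlinarith [hq'.1, hq.1, mul_nonneg hc.le hq.1]
    rw [Complex.le_def]
    constructor
    · rw [Complex.mul_re, Complex.ofReal_re, Complex.ofReal_im, zero_mul, sub_zero]
      exact hre
    · rw [Complex.mul_im, Complex.ofReal_re, Complex.ofReal_im, zero_mul, add_zero,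
        ← hq.2, mul_zero, ← hq'.2]
end
end

section
/- Let K be a positive definite map on a nonempty set X with Kolmogorov representation (H_K, v_K). Then for every positive definite map K' on X with K' ≤ cK for some c > 0, there exists a unique positive bounded operator S : H_K → H_K with ⟨S v_K(x), v_K(y)⟩ = K'(x,y) for all x, y ∈ X, and moreover ‖S‖ ≤ c. Conversely, for every positive bounded operator S on H_K there is a unique positive definite map K' on X satisfying ⟨S v_K(x), v_K(y)⟩ = K'(x,y) for all x, y ∈ X, and in addition K' ≤ ‖S‖ K. -/
open scoped InnerProductSpace ComplexOrder Classical
open Complex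

noncomputable section

section Aux
variable {X : Type*}

lemma sum_finset_key (s : Finset X) (g : X → X → ℂ) :
    ∑ x ∈ s, ∑ y ∈ s, g x y =
      ∑ i, ∑ j, g (s.equivFin.symm i : X) (s.equivFin.symm j : X) := by
  rw [← Finset.sum_coe_sort s (fun x => ∑ y ∈ s, g x y),
    ← Equiv.sum_comp s.equivFin.symm]
  refine Finset.sum_congr rfl fun i _ => ?_
  rw [← Finset.sum_coe_sort s (fun y => g _ y), ← Equiv.sum_comp s.equivFin.symm]

lemma posdef_finset {K : X → X → ℂ} (hK : IsPosDefKernel K) (s : Finset X) (f : X → ℂ) :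
    0 ≤ ∑ x ∈ s, ∑ y ∈ s, K x y * f x * (starRingEnd ℂ) (f y) := by
  rw [sum_finset_key s (fun x y => K x y * f x * (starRingEnd ℂ) (f y))]
  exact hK s.card _ _

lemma kernelLE_finset {K' K : X → X → ℂ} {c : ℝ} (h : KernelLE K' K c) (s : Finset X)
    (f : X → ℂ) :
    ∑ x ∈ s, ∑ y ∈ s, K' x y * f x * (starRingEnd ℂ) (f y) ≤
      (c : ℂ) * ∑ x ∈ s, ∑ y ∈ s, K x y * f x * (starRingEnd ℂ) (f y) := by
  rw [sum_finset_key s (fun x y => K' x y * f x * (starRingEnd ℂ) (f y)),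
    sum_finset_key s (fun x y => K x y * f x * (starRingEnd ℂ) (f y))]
  exact h s.card _ _

lemma posdef_hermitian {K : X → X → ℂ} (hK : IsPosDefKernel K) (x y : X) :
    K y x = (starRingEnd ℂ) (K x y) := by
  have h1 := hK 2 ![x, y] ![1, 1]
  have h2 := hK 2 ![x, y] ![1, Complex.I]
  have hx := hK 1 ![x] ![1]
  have hy := hK 1 ![y] ![1]
  simp [Fin.sum_univ_two, Fin.sum_univ_one] at h1 h2 hx hy
  rw [Complex.nonneg_iff] at h1 h2 hx hy
  apply Complex.ext <;>
    simp only [Complex.conj_re, Complex.conj_im, Complex.add_im, Complex.add_re,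
      Complex.mul_im, Complex.mul_re, Complex.I_re, Complex.I_im, Complex.neg_re, Complex.neg_im] at * <;>
    nlinarith [h1.2, h2.2, hx.2, hy.2]

end Aux

section BfSection
variable {X : Type*}

def Bf (K' : X → X → ℂ) (ξ η : X →₀ ℂ) : ℂ :=
  ∑ x ∈ ξ.support ∪ η.support, ∑ y ∈ ξ.support ∪ η.support,
    K' x y * ξ x * (starRingEnd ℂ) (η y)

lemma Bf_eq (K' : X → X → ℂ) {s : Finset X} {ξ η : X →₀ ℂ}
    (hξ : ξ.support ⊆ s) (hη : η.support ⊆ s) :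
    Bf K' ξ η = ∑ x ∈ s, ∑ y ∈ s, K' x y * ξ x * (starRingEnd ℂ) (η y) := by
  classical
  unfold Bf
  set u := ξ.support ∪ η.support with hu
  have hus : u ⊆ s := Finset.union_subset hξ hη
  have inner_eq : ∀ x : X,
      ∑ y ∈ u, K' x y * ξ x * (starRingEnd ℂ) (η y)
        = ∑ y ∈ s, K' x y * ξ x * (starRingEnd ℂ) (η y) := by
    intro x
    refine Finset.sum_subset hus fun y _ hyu => ?_
    have hη0 : η y = 0 := by
      by_contra hne
      exact hyu (Finset.mem_union_right _ (Finsupp.mem_support_iff.mpr hne))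
    simp [hη0]
  calc ∑ x ∈ u, ∑ y ∈ u, K' x y * ξ x * (starRingEnd ℂ) (η y)
      = ∑ x ∈ u, ∑ y ∈ s, K' x y * ξ x * (starRingEnd ℂ) (η y) :=
        Finset.sum_congr rfl fun x _ => inner_eq x
    _ = ∑ x ∈ s, ∑ y ∈ s, K' x y * ξ x * (starRingEnd ℂ) (η y) := by
        refine Finset.sum_subset hus fun x _ hxu => ?_
        have hξ0 : ξ x = 0 := by
          by_contra hne
          exact hxu (Finset.mem_union_left _ (Finsupp.mem_support_iff.mpr hne))
        exact Finset.sum_eq_zero fun y _ => by simp [hξ0]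

lemma Bf_nonneg {K' : X → X → ℂ} (hK' : IsPosDefKernel K') (ξ : X →₀ ℂ) :
    0 ≤ Bf K' ξ ξ :=
  posdef_finset hK' _ _

lemma Bf_add_left (K' : X → X → ℂ) (ξ₁ ξ₂ η : X →₀ ℂ) :
    Bf K' (ξ₁ + ξ₂) η = Bf K' ξ₁ η + Bf K' ξ₂ η := by
  classical
  set s := (ξ₁.support ∪ ξ₂.support) ∪ η.support with hs
  have h12 : (ξ₁ + ξ₂).support ⊆ s :=
    subset_trans Finsupp.support_add Finset.subset_union_left
  rw [Bf_eq K' h12 Finset.subset_union_right,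
    Bf_eq K' (subset_trans (Finset.subset_union_left) Finset.subset_union_left)
      Finset.subset_union_right,
    Bf_eq K' (subset_trans (Finset.subset_union_right) Finset.subset_union_left)
      Finset.subset_union_right,
    ← Finset.sum_add_distrib]
  refine Finset.sum_congr rfl fun x _ => ?_
  rw [← Finset.sum_add_distrib]
  refine Finset.sum_congr rfl fun y _ => ?_
  simp [Finsupp.add_apply]; ring

lemma Bf_smul_left (K' : X → X → ℂ) (r : ℂ) (ξ η : X →₀ ℂ) :
    Bf K' (r • ξ) η = r * Bf K' ξ η := by
  classical
  set s := ξ.support ∪ η.support with hs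
  have hrs : (r • ξ).support ⊆ s :=
    subset_trans Finsupp.support_smul Finset.subset_union_left
  rw [Bf_eq K' hrs Finset.subset_union_right,
    Bf_eq K' Finset.subset_union_left Finset.subset_union_right, Finset.mul_sum]
  refine Finset.sum_congr rfl fun x _ => ?_
  rw [Finset.mul_sum]
  refine Finset.sum_congr rfl fun y _ => ?_
  simp [Finsupp.smul_apply]; ring

lemma Bf_conj {K' : X → X → ℂ} (hK' : IsPosDefKernel K') (ξ η : X →₀ ℂ) :
    (starRingEnd ℂ) (Bf K' ξ η) = Bf K' η ξ := by
  classical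
  set s := ξ.support ∪ η.support with hs
  rw [Bf_eq K' Finset.subset_union_left Finset.subset_union_right,
    Bf_eq K' Finset.subset_union_right Finset.subset_union_left]
  rw [map_sum, Finset.sum_comm]
  refine Finset.sum_congr rfl fun y _ => ?_
  rw [map_sum]
  refine Finset.sum_congr rfl fun x _ => ?_
  rw [map_mul, map_mul, ← posdef_hermitian hK' y x]
  simp only [Complex.conj_conj]
  ring

lemma Bf_add_right {K' : X → X → ℂ} (hK' : IsPosDefKernel K') (ξ η₁ η₂ : X →₀ ℂ) :
    Bf K' ξ (η₁ + η₂) = Bf K' ξ η₁ + Bf K' ξ η₂ := by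
  rw [← Bf_conj hK' (η₁ + η₂) ξ, ← Bf_conj hK' η₁ ξ, ← Bf_conj hK' η₂ ξ, ← map_add,
    Bf_add_left]

lemma Bf_smul_right {K' : X → X → ℂ} (hK' : IsPosDefKernel K') (r : ℂ) (ξ η : X →₀ ℂ) :
    Bf K' ξ (r • η) = (starRingEnd ℂ) r * Bf K' ξ η := by
  rw [← Bf_conj hK' (r • η) ξ, Bf_smul_left, map_mul, Bf_conj hK' η ξ]

lemma Bf_single (K' : X → X → ℂ) (x y : X) :
    Bf K' (Finsupp.single x 1) (Finsupp.single y 1) = K' x y := by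
  classical
  have hx : (Finsupp.single x (1 : ℂ)).support ⊆ ({x, y} : Finset X) :=
    subset_trans Finsupp.support_single_subset (by simp)
  have hy : (Finsupp.single y (1 : ℂ)).support ⊆ ({x, y} : Finset X) :=
    subset_trans Finsupp.support_single_subset (by simp)
  rw [Bf_eq K' hx hy]
  rw [Finset.sum_eq_single_of_mem x (by simp)]
  · rw [Finset.sum_eq_single_of_mem y (by simp)]
    · simp
    · intro b _ hb
      simp [Finsupp.single_eq_of_ne' (Ne.symm hb)]
  · intro a _ ha
    exact Finset.sum_eq_zero fun b _ => by
      simp [Finsupp.single_eq_of_ne' (Ne.symm ha)]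

lemma Bf_cs {K' : X → X → ℂ} (hK' : IsPosDefKernel K') (ξ η : X →₀ ℂ) :
    ‖Bf K' ξ η‖ ^ 2 ≤ (Bf K' ξ ξ).re * (Bf K' η η).re := by
  classical
  letI core : PreInnerProductSpace.Core ℂ (X →₀ ℂ) :=
  { inner := fun a b => Bf K' b a
    conj_inner_symm := fun a b => Bf_conj hK' a b
    re_inner_nonneg := fun a => by
      have h := Complex.nonneg_iff.mp (Bf_nonneg hK' a)
      simpa using h.1
    add_left := fun a b c => Bf_add_right hK' c a b
    smul_left := fun a b r => Bf_smul_right hK' r b a }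
  have h := @InnerProductSpace.Core.inner_mul_inner_self_le ℂ (X →₀ ℂ) _ _ _ core ξ η
  have h1 : @inner ℂ (X →₀ ℂ) (InnerProductSpace.Core.toPreInner') ξ η = Bf K' η ξ := rfl
  have h2 : @inner ℂ (X →₀ ℂ) (InnerProductSpace.Core.toPreInner') η ξ = Bf K' ξ η := rfl
  have h3 : @inner ℂ (X →₀ ℂ) (InnerProductSpace.Core.toPreInner') ξ ξ = Bf K' ξ ξ := rfl
  have h4 : @inner ℂ (X →₀ ℂ) (InnerProductSpace.Core.toPreInner') η η = Bf K' η η := rfl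
  rw [h1, h2, h3, h4] at h
  have hnorm : ‖Bf K' η ξ‖ = ‖Bf K' ξ η‖ := by
    rw [← Bf_conj hK' ξ η, RCLike.norm_conj]
  rw [hnorm] at h
  simpa [pow_two] using h

end BfSection

section HilbAux
variable {X : Type*} {H : Type*} [NormedAddCommGroup H] [InnerProductSpace ℂ H]
  [CompleteSpace H] {v : X → H}

lemma inner_Phi_left (v : X → H) (ξ : X →₀ ℂ) (a : H) :
    ⟪Finsupp.linearCombination ℂ v ξ, a⟫_ℂ
      = ∑ y ∈ ξ.support, (starRingEnd ℂ) (ξ y) * ⟪v y, a⟫_ℂ := by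
  rw [Finsupp.linearCombination_apply, Finsupp.sum, sum_inner]
  exact Finset.sum_congr rfl fun y _ => by rw [inner_smul_left]

lemma Phi_inner {K : X → X → ℂ} (hrep : IsKolmogorovRep K H v) (ξ η : X →₀ ℂ) :
    ⟪Finsupp.linearCombination ℂ v η, Finsupp.linearCombination ℂ v ξ⟫_ℂ = Bf K ξ η := by
  classical
  set s := ξ.support ∪ η.support with hs
  have hΦ : ∀ ζ : X →₀ ℂ, ζ.support ⊆ s →
      Finsupp.linearCombination ℂ v ζ = ∑ x ∈ s, ζ x • v x := by
    intro ζ hζ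
    rw [Finsupp.linearCombination_apply,
      Finsupp.sum_of_support_subset _ hζ _ (fun i _ => zero_smul ℂ (v i))]
  rw [hΦ ξ Finset.subset_union_left, hΦ η Finset.subset_union_right,
    Bf_eq K Finset.subset_union_left Finset.subset_union_right]
  simp only [sum_inner, inner_sum, inner_smul_left, inner_smul_right, Finset.mul_sum]
  refine Finset.sum_congr rfl fun x _ => Finset.sum_congr rfl fun y _ => ?_
  rw [hrep.2 x y]
  ring

lemma inner_dense_eq (hd : Dense (↑(Submodule.span ℂ (Set.range v)) : Set H)) {a b : H}
    (h : ∀ ξ : X →₀ ℂ, ⟪Finsupp.linearCombination ℂ v ξ, a⟫_ℂ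
      = ⟪Finsupp.linearCombination ℂ v ξ, b⟫_ℂ) : a = b := by
  set M := Submodule.span ℂ (Set.range v) with hM
  have horth : a - b ∈ Mᗮ := by
    rw [Submodule.mem_orthogonal]
    intro u hu
    have : u ∈ LinearMap.range (Finsupp.linearCombination ℂ v) := by
      rw [Finsupp.range_linearCombination ℂ]; exact hu
    obtain ⟨ξ, rfl⟩ := this
    rw [inner_sub_right, h ξ, sub_self]
  have hbot : Mᗮ = ⊥ := by
    rw [← Submodule.topologicalClosure_eq_top_iff]
    exact Submodule.dense_iff_topologicalClosure_eq_top.mp hd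
  rw [hbot, Submodule.mem_bot, sub_eq_zero] at horth
  exact horth

lemma norm_le_of_inner_le (hd : Dense (↑(Submodule.span ℂ (Set.range v)) : Set H))
    {w : H} {b : ℝ} (hb : 0 ≤ b)
    (h : ∀ ξ : X →₀ ℂ, ‖⟪Finsupp.linearCombination ℂ v ξ, w⟫_ℂ‖
      ≤ b * ‖Finsupp.linearCombination ℂ v ξ‖) : ‖w‖ ≤ b := by
  have hall : ∀ u : H, ‖⟪u, w⟫_ℂ‖ ≤ b * ‖u‖ := by
    have hC : IsClosed {u : H | ‖⟪u, w⟫_ℂ‖ ≤ b * ‖u‖} :=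
      isClosed_le (Continuous.norm (Continuous.inner continuous_id continuous_const))
        (continuous_const.mul continuous_norm)
    intro u
    have hsub : (↑(Submodule.span ℂ (Set.range v)) : Set H)
        ⊆ {u : H | ‖⟪u, w⟫_ℂ‖ ≤ b * ‖u‖} := by
      intro u hu
      have : u ∈ LinearMap.range (Finsupp.linearCombination ℂ v) := by
        rw [Finsupp.range_linearCombination ℂ]; exact hu
      obtain ⟨ξ, rfl⟩ := this
      exact h ξ
    exact closure_minimal hsub hC (hd u)
  have h2 := hall w
  rw [inner_self_eq_norm_sq_to_K] at h2
  simp only [norm_pow, RCLike.norm_ofReal, abs_norm, norm_norm] at h2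
  nlinarith [norm_nonneg w]

end HilbAux

section Factor
variable {X : Type*} {H : Type*} [NormedAddCommGroup H] [InnerProductSpace ℂ H]
  [CompleteSpace H] {v : X → H}

lemma factor_dense (hd : Dense (↑(Submodule.span ℂ (Set.range v)) : Set H))
    {E : Type*} [NormedAddCommGroup E] [NormedSpace ℂ E] [CompleteSpace E]
    (W : (X →₀ ℂ) →ₗ[ℂ] E) {b : ℝ}
    (hW : ∀ ξ, ‖W ξ‖ ≤ b * ‖Finsupp.linearCombination ℂ v ξ‖) :
    ∃ T : H →L[ℂ] E, ∀ ξ, T (Finsupp.linearCombination ℂ v ξ) = W ξ := by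
  classical
  set Φ : (X →₀ ℂ) →ₗ[ℂ] H := Finsupp.linearCombination ℂ v with hΦ
  set M := Submodule.span ℂ (Set.range v) with hM
  have hMr : LinearMap.range Φ = M := Finsupp.range_linearCombination ℂ
  have hker : LinearMap.ker Φ ≤ LinearMap.ker W := by
    intro ξ hξ
    rw [LinearMap.mem_ker] at hξ ⊢
    have h1 := hW ξ
    rw [show Finsupp.linearCombination ℂ v ξ = Φ ξ from rfl, hξ, norm_zero, mul_zero] at h1
    exact norm_le_zero_iff.mp h1
  let T₀ : ↥M →ₗ[ℂ] E :=
    ((LinearMap.ker Φ).liftQ W hker).comp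
      ((LinearMap.quotKerEquivRange Φ).symm.toLinearMap.comp
        (LinearEquiv.ofEq M (LinearMap.range Φ) hMr.symm).toLinearMap)
  have hT₀ : ∀ (ξ : X →₀ ℂ) (h : Φ ξ ∈ M), T₀ ⟨Φ ξ, h⟩ = W ξ := by
    intro ξ h
    have h1 : (LinearEquiv.ofEq M (LinearMap.range Φ) hMr.symm) ⟨Φ ξ, h⟩
        = ⟨Φ ξ, LinearMap.mem_range_self Φ ξ⟩ := rfl
    have h2 : (LinearMap.quotKerEquivRange Φ).symm ⟨Φ ξ, LinearMap.mem_range_self Φ ξ⟩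
        = (LinearMap.ker Φ).mkQ ξ :=
      LinearMap.quotKerEquivRange_symm_apply_image Φ ξ (LinearMap.mem_range_self Φ ξ)
    simp only [T₀, LinearMap.coe_comp, Function.comp_apply, LinearEquiv.coe_coe, h1, h2]
    exact Submodule.liftQ_apply _ W ξ
  have hbound : ∀ u : ↥M, ‖T₀ u‖ ≤ b * ‖u‖ := by
    intro u
    have hu : (u : H) ∈ LinearMap.range Φ := by rw [hMr]; exact u.2
    obtain ⟨ξ, hξ⟩ := hu
    have hu' : u = ⟨Φ ξ, by rw [hξ]; exact u.2⟩ := Subtype.ext hξ.symm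
    rw [hu', hT₀]
    have : ‖(⟨Φ ξ, by rw [hξ]; exact u.2⟩ : ↥M)‖ = ‖Φ ξ‖ := rfl
    rw [this]
    exact hW ξ
  let T₁ : ↥M →L[ℂ] E := LinearMap.mkContinuous T₀ b hbound
  have hdr : DenseRange (M.subtypeL) := by
    have hrange : Set.range (M.subtypeL) = (M : Set H) := Subtype.range_coe
    rw [DenseRange, hrange]; exact hd
  have hui : IsUniformInducing (M.subtypeL : ↥M →L[ℂ] H) :=
    isometry_subtype_coe.isUniformInducing
  refine ⟨T₁.extend M.subtypeL, fun ξ => ?_⟩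
  have hm : Φ ξ ∈ M := by rw [← hMr]; exact LinearMap.mem_range_self Φ ξ
  have heq : Finsupp.linearCombination ℂ v ξ = M.subtypeL ⟨Φ ξ, hm⟩ := rfl
  rw [heq, ContinuousLinearMap.extend_eq (h_dense := hdr) (h_e := hui)]
  show T₀ ⟨Φ ξ, hm⟩ = W ξ
  exact hT₀ ξ hm

end Factor

section MainLemmas
variable {X : Type*} {H : Type*} [NormedAddCommGroup H] [InnerProductSpace ℂ H]
  [CompleteSpace H] {v : X → H} {K : X → X → ℂ}

lemma op_unique (hrep : IsKolmogorovRep K H v) {S S' : H →L[ℂ] H}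
    (h : ∀ x y : X, ⟪v y, S (v x)⟫_ℂ = ⟪v y, S' (v x)⟫_ℂ) : S = S' := by
  apply ContinuousLinearMap.ext_on hrep.1
  rintro _ ⟨x, rfl⟩
  refine inner_dense_eq hrep.1 fun ξ => ?_
  rw [inner_Phi_left, inner_Phi_left]
  exact Finset.sum_congr rfl fun y _ => by rw [h x y]

lemma exists_op (hrep : IsKolmogorovRep K H v) {K' : X → X → ℂ} {c : ℝ}
    (hc : 0 < c) (hK' : IsPosDefKernel K') (hle : KernelLE K' K c) :
    ∃ S : H →L[ℂ] H, IsPositiveOp S ∧ (∀ x y : X, ⟪v y, S (v x)⟫_ℂ = K' x y) ∧ ‖S‖ ≤ c := by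
  classical
  set Φ : (X →₀ ℂ) →ₗ[ℂ] H := Finsupp.linearCombination ℂ v with hΦdef
  set M : Submodule ℂ H := Submodule.span ℂ (Set.range v) with hMdef
  have hMr : LinearMap.range Φ = M := Finsupp.range_linearCombination ℂ
  have hdense : Dense (M : Set H) := hrep.1
  -- domination
  have hdom : ∀ ξ : X →₀ ℂ, (Bf K' ξ ξ).re ≤ c * ‖Φ ξ‖ ^ 2 := by
    intro ξ
    have h1 : Bf K' ξ ξ ≤ (c : ℂ) * Bf K ξ ξ := by
      rw [Bf_eq K' (Finset.Subset.refl ξ.support) (Finset.Subset.refl _),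
        Bf_eq K (Finset.Subset.refl ξ.support) (Finset.Subset.refl _)]
      exact kernelLE_finset hle ξ.support ξ
    have h2 := (Complex.le_def.mp h1).1
    have h4 : (Bf K ξ ξ).re = ‖Φ ξ‖ ^ 2 := by
      rw [← Phi_inner hrep ξ ξ]
      have h5 := inner_self_eq_norm_sq (𝕜 := ℂ) (Φ ξ)
      simpa using h5
    rw [Complex.re_ofReal_mul, h4] at h2
    exact h2
  -- Cauchy–Schwarz bound
  have hbound : ∀ ξ η : X →₀ ℂ, ‖Bf K' ξ η‖ ≤ c * ‖Φ ξ‖ * ‖Φ η‖ := by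
    intro ξ η
    have hcs := Bf_cs hK' ξ η
    have hη0 : 0 ≤ (Bf K' η η).re := by
      simpa using (Complex.nonneg_iff.mp (Bf_nonneg hK' η)).1
    have h1 : ‖Bf K' ξ η‖ ^ 2 ≤ (c * ‖Φ ξ‖ * ‖Φ η‖) ^ 2 := by
      calc ‖Bf K' ξ η‖ ^ 2 ≤ (Bf K' ξ ξ).re * (Bf K' η η).re := hcs
        _ ≤ (c * ‖Φ ξ‖ ^ 2) * (c * ‖Φ η‖ ^ 2) := by
            refine mul_le_mul (hdom ξ) (hdom η) hη0 ?_
            positivity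
        _ = (c * ‖Φ ξ‖ * ‖Φ η‖) ^ 2 := by ring
    have hb0 : 0 ≤ c * ‖Φ ξ‖ * ‖Φ η‖ := by positivity
    nlinarith [norm_nonneg (Bf K' ξ η)]
  -- the functionals
  let N : (X →₀ ℂ) → ((X →₀ ℂ) →ₗ[ℂ] ℂ) := fun ξ =>
    { toFun := fun η => (starRingEnd ℂ) (Bf K' ξ η)
      map_add' := fun a b => by simp [Bf_add_right hK']
      map_smul' := fun r a => by simp [Bf_smul_right hK'] }
  have hNle : ∀ ξ η : X →₀ ℂ, ‖N ξ η‖ ≤ (c * ‖Φ ξ‖) * ‖Φ η‖ := by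
    intro ξ η
    have : ‖N ξ η‖ = ‖Bf K' ξ η‖ := RCLike.norm_conj _
    rw [this, mul_assoc] at *
    simpa [mul_assoc] using hbound ξ η
  have hg : ∀ ξ : X →₀ ℂ, ∃ g : H →L[ℂ] ℂ, ∀ η, g (Φ η) = N ξ η := by
    intro ξ
    exact factor_dense hdense (N ξ) (hNle ξ)
  choose g hgspec using hg
  let W : (X →₀ ℂ) → H := fun ξ => (InnerProductSpace.toDual ℂ H).symm (g ξ)
  have hWinner : ∀ ξ η : X →₀ ℂ, ⟪Φ η, W ξ⟫_ℂ = Bf K' ξ η := by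
    intro ξ η
    calc ⟪Φ η, W ξ⟫_ℂ = (starRingEnd ℂ) ⟪W ξ, Φ η⟫_ℂ := (inner_conj_symm _ _).symm
      _ = (starRingEnd ℂ) ((g ξ) (Φ η)) := by
          rw [InnerProductSpace.toDual_symm_apply]
      _ = (starRingEnd ℂ) ((starRingEnd ℂ) (Bf K' ξ η)) := by rw [hgspec ξ η]; rfl
      _ = Bf K' ξ η := Complex.conj_conj _
  have hWnorm : ∀ ξ : X →₀ ℂ, ‖W ξ‖ ≤ c * ‖Φ ξ‖ := by
    intro ξ
    refine norm_le_of_inner_le hdense (by positivity) fun η => ?_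
    rw [hWinner ξ η]
    calc ‖Bf K' ξ η‖ ≤ c * ‖Φ ξ‖ * ‖Φ η‖ := hbound ξ η
      _ = c * ‖Φ ξ‖ * ‖Finsupp.linearCombination ℂ v η‖ := rfl
  let Wlin : (X →₀ ℂ) →ₗ[ℂ] H :=
    { toFun := W
      map_add' := fun a b => by
        refine inner_dense_eq hdense fun ζ => ?_
        rw [show Finsupp.linearCombination ℂ v ζ = Φ ζ from rfl]
        rw [hWinner (a + b) ζ, inner_add_right, hWinner a ζ, hWinner b ζ, Bf_add_left]
      map_smul' := fun r a => by
        refine inner_dense_eq hdense fun ζ => ?_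
        rw [show Finsupp.linearCombination ℂ v ζ = Φ ζ from rfl]
        rw [hWinner (r • a) ζ, RingHom.id_apply, inner_smul_right, hWinner a ζ,
          Bf_smul_left] }
  obtain ⟨S, hS⟩ := factor_dense hdense Wlin hWnorm
  have hSinner : ∀ ξ η : X →₀ ℂ, ⟪Φ η, S (Φ ξ)⟫_ℂ = Bf K' ξ η := by
    intro ξ η
    rw [show Φ ξ = Finsupp.linearCombination ℂ v ξ from rfl, hS ξ]
    exact hWinner ξ η
  have hvx : ∀ x : X, v x = Φ (Finsupp.single x 1) := by
    intro x
    rw [hΦdef, Finsupp.linearCombination_single, one_smul]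
  have hSvv : ∀ x y : X, ⟪v y, S (v x)⟫_ℂ = K' x y := by
    intro x y
    rw [hvx x, hvx y, hSinner, Bf_single]
  have hpos : IsPositiveOp S := by
    have hM0 : (M : Set H) ⊆ {u : H | 0 ≤ ⟪u, S u⟫_ℂ} := by
      intro u hu
      have : u ∈ LinearMap.range Φ := by rw [hMr]; exact hu
      obtain ⟨ξ, rfl⟩ := this
      have := hSinner ξ ξ
      simp only [Set.mem_setOf_eq, this]
      exact Bf_nonneg hK' ξ
    have hcont : Continuous fun u : H => ⟪u, S u⟫_ℂ :=
      Continuous.inner continuous_id S.continuous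
    have hC : IsClosed {u : H | 0 ≤ ⟪u, S u⟫_ℂ} := by
      have heq : {u : H | 0 ≤ ⟪u, S u⟫_ℂ}
          = {u : H | 0 ≤ (⟪u, S u⟫_ℂ).re} ∩ {u : H | (⟪u, S u⟫_ℂ).im = 0} := by
        ext u
        simp [Complex.nonneg_iff, eq_comm]
      rw [heq]
      exact (isClosed_le continuous_const (Complex.continuous_re.comp hcont)).inter
        (isClosed_eq (Complex.continuous_im.comp hcont) continuous_const)
    intro u
    exact closure_minimal hM0 hC (hdense u)
  have hnorm : ‖S‖ ≤ c := by
    refine S.opNorm_le_bound hc.le fun u => ?_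
    have hM0 : (M : Set H) ⊆ {u : H | ‖S u‖ ≤ c * ‖u‖} := by
      intro u hu
      have : u ∈ LinearMap.range Φ := by rw [hMr]; exact hu
      obtain ⟨ξ, rfl⟩ := this
      have h1 : S (Φ ξ) = Wlin ξ := hS ξ
      simp only [Set.mem_setOf_eq, h1]
      exact hWnorm ξ
    have hC : IsClosed {u : H | ‖S u‖ ≤ c * ‖u‖} :=
      isClosed_le S.continuous.norm (continuous_const.mul continuous_norm)
    exact closure_minimal hM0 hC (hdense u)
  exact ⟨S, hpos, hSvv, hnorm⟩

end MainLemmas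

section Part2
variable {X : Type*} {H : Type*} [NormedAddCommGroup H] [InnerProductSpace ℂ H]
  [CompleteSpace H] {v : X → H} {K : X → X → ℂ}

lemma sum_inner_quad (S : H →L[ℂ] H) (n : ℕ) (x : Fin n → X) (ξ : Fin n → ℂ) :
    ∑ i, ∑ j, ⟪v (x j), S (v (x i))⟫_ℂ * ξ i * (starRingEnd ℂ) (ξ j)
      = ⟪∑ j, ξ j • v (x j), S (∑ i, ξ i • v (x i))⟫_ℂ := by
  rw [map_sum]
  simp only [map_smul, sum_inner, inner_sum, inner_smul_left, inner_smul_right,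
    Finset.mul_sum]
  refine Finset.sum_congr rfl fun i _ => Finset.sum_congr rfl fun j _ => ?_
  ring

lemma sum_quad_K (hrep : IsKolmogorovRep K H v) (n : ℕ) (x : Fin n → X) (ξ : Fin n → ℂ) :
    ∑ i, ∑ j, K (x i) (x j) * ξ i * (starRingEnd ℂ) (ξ j)
      = ⟪∑ j, ξ j • v (x j), ∑ i, ξ i • v (x i)⟫_ℂ := by
  have h := sum_inner_quad (v := v) (ContinuousLinearMap.id ℂ H) n x ξ
  simp only [ContinuousLinearMap.id_apply] at h
  rw [← h]
  exact Finset.sum_congr rfl fun i _ => Finset.sum_congr rfl fun j _ => by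
    rw [hrep.2 (x i) (x j)]

lemma part2_posdef (hrep : IsKolmogorovRep K H v) (S : H →L[ℂ] H) (hS : IsPositiveOp S) :
    IsPosDefKernel (fun x y => ⟪v y, S (v x)⟫_ℂ) := by
  intro n x ξ
  rw [sum_inner_quad]
  exact hS _

lemma part2_le (hrep : IsKolmogorovRep K H v) (S : H →L[ℂ] H) (hS : IsPositiveOp S) :
    KernelLE (fun x y => ⟪v y, S (v x)⟫_ℂ) K ‖S‖ := by
  intro n x ξ
  rw [sum_inner_quad, sum_quad_K hrep]
  set w := ∑ i, ξ i • v (x i) with hw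
  have hpos := hS w
  rw [Complex.le_def]
  constructor
  · have h1 : (⟪w, S w⟫_ℂ).re ≤ ‖⟪w, S w⟫_ℂ‖ := Complex.re_le_norm _
    have h2 : ‖⟪w, S w⟫_ℂ‖ ≤ ‖w‖ * ‖S w‖ := norm_inner_le_norm _ _
    have h3 : ‖S w‖ ≤ ‖S‖ * ‖w‖ := S.le_opNorm w
    have h4 : ((‖S‖ : ℂ) * ⟪w, w⟫_ℂ).re = ‖S‖ * ‖w‖ ^ 2 := by
      rw [Complex.re_ofReal_mul]
      congr 1
      have h5 := inner_self_eq_norm_sq (𝕜 := ℂ) w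
      simpa using h5
    rw [h4]
    nlinarith [norm_nonneg w, norm_nonneg S, norm_nonneg (S w)]
  · have him : (⟪w, S w⟫_ℂ).im = 0 := ((Complex.nonneg_iff.mp hpos).2).symm
    have him2 : (⟪w, w⟫_ℂ).im = 0 := by
      have h5 := inner_self_im (𝕜 := ℂ) w
      rwa [RCLike.im_to_complex] at h5
    rw [him, Complex.mul_im]
    simp [him2, pow_two]

end Part2


/-- Positive operators on `H_K` correspond to positive definite kernels dominated by a
multiple of `K`. -/
theorem posdef_dominated_iff_positive_operator {X : Type*} [Nonempty X] (K : X → X → ℂ)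
    (hK : IsPosDefKernel K)
    {H : Type*} [NormedAddCommGroup H] [InnerProductSpace ℂ H] [CompleteSpace H]
    (v : X → H) (hrep : IsKolmogorovRep K H v) :
    (∀ (K' : X → X → ℂ) (c : ℝ), 0 < c → IsPosDefKernel K' → KernelLE K' K c →
      (∃! S : H →L[ℂ] H, IsPositiveOp S ∧ ∀ x y : X, ⟪v y, S (v x)⟫_ℂ = K' x y) ∧
      (∀ S : H →L[ℂ] H,
        (IsPositiveOp S ∧ ∀ x y : X, ⟪v y, S (v x)⟫_ℂ = K' x y) → ‖S‖ ≤ c)) ∧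
    (∀ S : H →L[ℂ] H, IsPositiveOp S →
      (∃! K' : X → X → ℂ, ∀ x y : X, ⟪v y, S (v x)⟫_ℂ = K' x y) ∧
      (∀ K' : X → X → ℂ, (∀ x y : X, ⟪v y, S (v x)⟫_ℂ = K' x y) →
        IsPosDefKernel K' ∧ KernelLE K' K ‖S‖)) := by
  constructor
  · intro K' c hc hK' hle
    obtain ⟨S, hSpos, hSinner, hSnorm⟩ := exists_op hrep hc hK' hle
    refine ⟨⟨S, ⟨hSpos, hSinner⟩, ?_⟩, ?_⟩
    · rintro S' ⟨_, hinner'⟩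
      exact op_unique hrep fun x y => by rw [hinner' x y, hSinner x y]
    · rintro S' ⟨_, hinner'⟩
      have hss : S' = S := op_unique hrep fun x y => by rw [hinner' x y, hSinner x y]
      rw [hss]
      exact hSnorm
  · intro S hSpos
    constructor
    · refine ⟨fun x y => ⟪v y, S (v x)⟫_ℂ, fun x y => rfl, ?_⟩
      intro K'' h
      funext x y
      exact (h x y).symm
    · intro K' hK'eq
      have hK'fun : K' = fun x y => ⟪v y, S (v x)⟫_ℂ := by
        funext x y
        exact (hK'eq x y).symm
      rw [hK'fun]
      exact ⟨part2_posdef hrep S hSpos, part2_le hrep S hSpos⟩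
end
end

section
/- Let A be a (unital) C*-algebra, let φ, φ' be positive linear functionals on A with GNS representations (H_φ, π_φ, ξ₀) and (H_{φ'}, π_{φ'}, ξ₀'), and let φ₀ : A → ℂ be a linear map such that |φ₀(y*x)|² ≤ c φ(x*x) φ'(y*y) for all x, y ∈ A and some c > 0. Then there exists a unique bounded linear operator S : H_φ → H_{φ'} such that S π_φ(x) = π_{φ'}(x) S for all x ∈ A and ⟨S π_φ(x) ξ₀, π_{φ'}(y) ξ₀'⟩ = φ₀(y*x) for all x, y ∈ A; moreover ‖S‖ ≤ √c. Conversely, if S : H_φ → H_{φ'} is a bounded linear operator satisfying S π_φ(x) = π_{φ'}(x) S for all x ∈ A, then there is a unique linear map φ₀ : A → ℂ with ⟨S π_φ(x) ξ₀, π_{φ'}(y) ξ₀'⟩ = φ₀(y*x) for all x, y ∈ A, and it satisfies |φ₀(y*x)|² ≤ ‖S‖² φ(x*x) φ'(y*y) for all x, y ∈ A. -/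
open scoped InnerProductSpace ComplexOrder Classical
open Complex

noncomputable section

variable {A : Type*} [NormedRing A] [StarRing A] [CStarRing A]
  [NormedAlgebra ℂ A] [StarModule ℂ A] [CompleteSpace A]

/-- `(H, π, ξ₀)` is a GNS representation of the positive linear functional `φ`. -/
def IsGNSRep {H : Type*} [NormedAddCommGroup H] [InnerProductSpace ℂ H] [CompleteSpace H]
    (φ : A →ₗ[ℂ] ℂ) (π : A →⋆ₐ[ℂ] (H →L[ℂ] H)) (ξ₀ : H) : Prop :=
  Dense (↑(Submodule.span ℂ (Set.range fun x : A => π x ξ₀)) : Set H) ∧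
    ∀ x : A, ⟪ξ₀, π x ξ₀⟫_ℂ = φ x

lemma inner_ext_dense {H : Type*} [NormedAddCommGroup H] [InnerProductSpace ℂ H]
    {ι : Type*} {v : ι → H} (hd : DenseRange v) {u w : H}
    (h : ∀ i, ⟪v i, u⟫_ℂ = ⟪v i, w⟫_ℂ) : u = w := by
  refine ext_inner_left ℂ fun z => ?_
  refine hd.induction_on z ?_ h
  exact isClosed_eq (continuous_id.inner continuous_const) (continuous_id.inner continuous_const)

lemma exists_rep {E F : Type*} [AddCommGroup E] [Module ℂ E] [AddCommGroup F] [Module ℂ F]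
    {H : Type*} [NormedAddCommGroup H] [InnerProductSpace ℂ H] [CompleteSpace H]
    {H' : Type*} [NormedAddCommGroup H'] [InnerProductSpace ℂ H'] [CompleteSpace H']
    (j : E →ₗ[ℂ] H) (j' : F →ₗ[ℂ] H')
    (hd : Dense (↑(LinearMap.range j) : Set H)) (hd' : Dense (↑(LinearMap.range j') : Set H'))
    (B : E → F → ℂ)
    (hBx : ∀ x x' y, B (x + x') y = B x y + B x' y)
    (hBxs : ∀ (a : ℂ) (x y), B (a • x) y = a * B x y)
    (hBys : ∀ (a : ℂ) (x y), B x (a • y) = (starRingEnd ℂ) a * B x y)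
    (hBy : ∀ x y y', B x (y + y') = B x y + B x y')
    (M : ℝ) (hM : 0 ≤ M) (hb : ∀ x y, ‖B x y‖ ≤ M * ‖j x‖ * ‖j' y‖) :
    ∃ S : H →L[ℂ] H', ∀ x y, ⟪j' y, S (j x)⟫_ℂ = B x y := by
  classical
  -- dense ranges
  have hdr' : DenseRange (Submodule.subtypeL (LinearMap.range j') : _ → H') := by
    have : Set.range (Subtype.val : LinearMap.range j' → H') = ↑(LinearMap.range j') :=
      Subtype.range_coe
    simpa [DenseRange, this] using hd'
  have hdr : DenseRange (Submodule.subtypeL (LinearMap.range j) : _ → H) := by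
    have : Set.range (Subtype.val : LinearMap.range j → H) = ↑(LinearMap.range j) :=
      Subtype.range_coe
    simpa [DenseRange, this] using hd
  have hdrj' : DenseRange (⇑j') := by
    have : Set.range ⇑j' = ↑(LinearMap.range j') := (LinearMap.coe_range j').symm
    simpa [DenseRange, this] using hd'
  have hui' : IsUniformInducing (Submodule.subtypeL (LinearMap.range j') : _ → H') :=
    isometry_subtype_coe.isUniformInducing
  have hui : IsUniformInducing (Submodule.subtypeL (LinearMap.range j) : _ → H) :=
    isometry_subtype_coe.isUniformInducing
  -- negation and well-definedness in y
  have hBy0 : ∀ x y y', j' y = j' y' → B x y = B x y' := by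
    intro x y y' hyy
    have h1 : B x (y + (-1 : ℂ) • y') = B x y + (starRingEnd ℂ) (-1) * B x y' := by
      rw [hBy, hBys]
    have h2 : ‖B x (y + (-1 : ℂ) • y')‖ ≤ M * ‖j x‖ * ‖j' (y + (-1 : ℂ) • y')‖ := hb _ _
    have h3 : j' (y + (-1 : ℂ) • y') = 0 := by
      rw [map_add, map_smul, hyy]; simp
    rw [h3] at h2
    simp at h2
    have : B x y + (starRingEnd ℂ) (-1) * B x y' = 0 := by
      rw [← h1]; exact norm_le_zero_iff.mp (by simpa using h2)
    exact sub_eq_zero.mp (by rw [sub_eq_add_neg]; simpa using this)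
  have hch' : ∀ m : LinearMap.range j', j' (LinearMap.mem_range.mp m.2).choose = ↑m :=
    fun m => (LinearMap.mem_range.mp m.2).choose_spec
  have hch : ∀ m : LinearMap.range j, j (LinearMap.mem_range.mp m.2).choose = ↑m :=
    fun m => (LinearMap.mem_range.mp m.2).choose_spec
  -- bounded functional on the range of j', for fixed x
  have conj_add : ∀ z w : ℂ, (starRingEnd ℂ) (z + w) = (starRingEnd ℂ) z + (starRingEnd ℂ) w :=
    fun z w => map_add _ _ _
  let Fx : E → (LinearMap.range j' →ₗ[ℂ] ℂ) := fun x =>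
    { toFun := fun m => (starRingEnd ℂ) (B x (LinearMap.mem_range.mp m.2).choose)
      map_add' := by
        intro m n
        have h1 : j' (LinearMap.mem_range.mp (m + n).2).choose
            = j' ((LinearMap.mem_range.mp m.2).choose + (LinearMap.mem_range.mp n.2).choose) := by
          rw [map_add, hch', hch', hch']; rfl
        simp only [hBy0 x _ _ h1, hBy, conj_add]
      map_smul' := by
        intro a m
        have h1 : j' (LinearMap.mem_range.mp (a • m).2).choose
            = j' (a • (LinearMap.mem_range.mp m.2).choose) := by
          rw [map_smul, hch', hch']; rfl
        simp only [hBy0 x _ _ h1, hBys, map_mul, RingHom.id_apply]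
        simp }
  have hFxb : ∀ x (m : LinearMap.range j'), ‖Fx x m‖ ≤ (M * ‖j x‖) * ‖m‖ := by
    intro x m
    have : ‖Fx x m‖ = ‖B x (LinearMap.mem_range.mp m.2).choose‖ := by
      simp [Fx]
    rw [this]
    calc ‖B x (LinearMap.mem_range.mp m.2).choose‖
        ≤ M * ‖j x‖ * ‖j' (LinearMap.mem_range.mp m.2).choose‖ := hb _ _
      _ = (M * ‖j x‖) * ‖m‖ := by rw [hch']; rfl
  let ℓ : E → (H' →L[ℂ] ℂ) := fun x =>
    ((Fx x).mkContinuous (M * ‖j x‖) (hFxb x)).extend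
      (Submodule.subtypeL (LinearMap.range j'))
  let S₀ : E → H' := fun x => (InnerProductSpace.toDual ℂ H').symm (ℓ x)
  have key : ∀ x y, ⟪j' y, S₀ x⟫_ℂ = B x y := by
    intro x y
    have h1 : ⟪S₀ x, j' y⟫_ℂ = ℓ x (j' y) := by
      rw [← InnerProductSpace.toDual_apply_apply]
      simp [S₀]
    have h2 : ℓ x (j' y) = (starRingEnd ℂ) (B x y) := by
      have hy : j' y = (Submodule.subtypeL (LinearMap.range j'))
          ⟨j' y, LinearMap.mem_range_self _ y⟩ := rfl
      rw [show ℓ x (j' y) = ℓ x ((Submodule.subtypeL (LinearMap.range j'))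
        ⟨j' y, LinearMap.mem_range_self _ y⟩) from by rw [← hy]]
      rw [show ℓ x = ((Fx x).mkContinuous (M * ‖j x‖) (hFxb x)).extend
        (Submodule.subtypeL (LinearMap.range j')) from rfl]
      rw [ContinuousLinearMap.extend_eq _ hdr' hui']
      have h3 : j' (LinearMap.mem_range.mp
          (⟨j' y, LinearMap.mem_range_self _ y⟩ : LinearMap.range j').2).choose = j' y := hch' _
      simp only [LinearMap.mkContinuous_apply]
      show (starRingEnd ℂ) (B x _) = _
      rw [hBy0 x _ _ h3]
    rw [← inner_conj_symm, h1, h2]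
    simp
  have hS0norm : ∀ x, ‖S₀ x‖ ≤ M * ‖j x‖ := by
    intro x
    have hw : ∀ w : H', ‖⟪w, S₀ x⟫_ℂ‖ ≤ M * ‖j x‖ * ‖w‖ := by
      intro w
      refine hdrj'.induction_on w ?_ ?_
      · exact isClosed_le ((continuous_id.inner continuous_const).norm)
          (continuous_const.mul continuous_norm)
      · intro y; rw [key]; exact hb x y
    have h1 := hw (S₀ x)
    rw [inner_self_eq_norm_sq_to_K] at h1
    simp only [norm_pow, RCLike.norm_ofReal, abs_norm] at h1
    rcases (norm_nonneg (S₀ x)).lt_or_eq with h | h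
    · nlinarith
    · rw [← h]; exact mul_nonneg hM (norm_nonneg _)
  have hS0add : ∀ x x', S₀ (x + x') = S₀ x + S₀ x' := by
    intro x x'
    refine inner_ext_dense hdrj' fun y => ?_
    rw [key, inner_add_right, key, key, hBx]
  have hS0smul : ∀ (a : ℂ) x, S₀ (a • x) = a • S₀ x := by
    intro a x
    refine inner_ext_dense hdrj' fun y => ?_
    rw [key, inner_smul_right, key, hBxs]
  have hS0wd : ∀ x x', j x = j x' → S₀ x = S₀ x' := by
    intro x x' hxx
    have hj : j (x + (-1 : ℂ) • x') = 0 := by rw [map_add, map_smul, hxx]; simp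
    have h0 : ‖S₀ x - S₀ x'‖ ≤ 0 := by
      have he : S₀ x - S₀ x' = S₀ (x + (-1 : ℂ) • x') := by
        rw [hS0add, hS0smul]; simp [sub_eq_add_neg]
      rw [he]
      calc ‖S₀ (x + (-1 : ℂ) • x')‖ ≤ M * ‖j (x + (-1 : ℂ) • x')‖ := hS0norm _
        _ = 0 := by rw [hj]; simp
    have := norm_le_zero_iff.mp h0
    exact sub_eq_zero.mp this
  let G : LinearMap.range j →ₗ[ℂ] H' :=
    { toFun := fun m => S₀ (LinearMap.mem_range.mp m.2).choose
      map_add' := by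
        intro m n
        have h1 : j (LinearMap.mem_range.mp (m + n).2).choose
            = j ((LinearMap.mem_range.mp m.2).choose + (LinearMap.mem_range.mp n.2).choose) := by
          rw [map_add, hch, hch, hch]; rfl
        rw [hS0wd _ _ h1, hS0add]
      map_smul' := by
        intro a m
        have h1 : j (LinearMap.mem_range.mp (a • m).2).choose
            = j (a • (LinearMap.mem_range.mp m.2).choose) := by
          rw [map_smul, hch, hch]; rfl
        rw [hS0wd _ _ h1, hS0smul]; rfl }
  have hGb : ∀ m : LinearMap.range j, ‖G m‖ ≤ M * ‖m‖ := by
    intro m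
    calc ‖G m‖ = ‖S₀ (LinearMap.mem_range.mp m.2).choose‖ := rfl
      _ ≤ M * ‖j (LinearMap.mem_range.mp m.2).choose‖ := hS0norm _
      _ = M * ‖m‖ := by rw [hch]; rfl
  refine ⟨(G.mkContinuous M hGb).extend (Submodule.subtypeL (LinearMap.range j)),
    fun x y => ?_⟩
  have hx : j x = (Submodule.subtypeL (LinearMap.range j))
      ⟨j x, LinearMap.mem_range_self _ x⟩ := rfl
  rw [hx, ContinuousLinearMap.extend_eq _ hdr hui]
  have h3 : j (LinearMap.mem_range.mp
      (⟨j x, LinearMap.mem_range_self _ x⟩ : LinearMap.range j).2).choose = j x := hch _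
  simp only [LinearMap.mkContinuous_apply]
  show ⟪j' y, S₀ _⟫_ℂ = B x y
  rw [hS0wd _ _ h3, key]

/-- Intertwining operators between GNS representations correspond to linear functionals
`φ₀` with `|φ₀(y*x)|² ≤ c φ(x*x) φ'(y*y)`. -/
theorem gns_intertwiner (φ φ' : A →ₗ[ℂ] ℂ)
    (hφ : ∀ x : A, 0 ≤ φ (star x * x)) (hφ' : ∀ x : A, 0 ≤ φ' (star x * x))
    {H : Type*} [NormedAddCommGroup H] [InnerProductSpace ℂ H] [CompleteSpace H]
    {H' : Type*} [NormedAddCommGroup H'] [InnerProductSpace ℂ H'] [CompleteSpace H']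
    (π : A →⋆ₐ[ℂ] (H →L[ℂ] H)) (ξ₀ : H) (π' : A →⋆ₐ[ℂ] (H' →L[ℂ] H')) (ξ₀' : H')
    (hrep : IsGNSRep φ π ξ₀) (hrep' : IsGNSRep φ' π' ξ₀') :
    (∀ (φ₀ : A →ₗ[ℂ] ℂ) (c : ℝ), 0 < c →
      (∀ x y : A, ‖φ₀ (star y * x)‖ ^ 2 ≤ c * (φ (star x * x)).re * (φ' (star y * y)).re) →
      (∃! S : H →L[ℂ] H',
        (∀ x : A, S.comp (π x) = (π' x).comp S) ∧
        (∀ x y : A, ⟪π' y ξ₀', S (π x ξ₀)⟫_ℂ = φ₀ (star y * x))) ∧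
      (∀ S : H →L[ℂ] H',
        ((∀ x : A, S.comp (π x) = (π' x).comp S) ∧
         (∀ x y : A, ⟪π' y ξ₀', S (π x ξ₀)⟫_ℂ = φ₀ (star y * x))) → ‖S‖ ≤ Real.sqrt c)) ∧
    (∀ S : H →L[ℂ] H', (∀ x : A, S.comp (π x) = (π' x).comp S) →
      (∃! φ₀ : A →ₗ[ℂ] ℂ, ∀ x y : A, ⟪π' y ξ₀', S (π x ξ₀)⟫_ℂ = φ₀ (star y * x)) ∧
      (∀ φ₀ : A →ₗ[ℂ] ℂ, (∀ x y : A, ⟪π' y ξ₀', S (π x ξ₀)⟫_ℂ = φ₀ (star y * x)) →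
        ∀ x y : A,
          ‖φ₀ (star y * x)‖ ^ 2 ≤ ‖S‖ ^ 2 * (φ (star x * x)).re * (φ' (star y * y)).re)) := by
  obtain ⟨hdense, hval⟩ := hrep
  obtain ⟨hdense', hval'⟩ := hrep'
  -- the canonical linear maps into the representation spaces
  let j : A →ₗ[ℂ] H :=
    { toFun := fun x => π x ξ₀
      map_add' := fun x x' => by simp [map_add]
      map_smul' := fun a x => by simp [map_smul] }
  let j' : A →ₗ[ℂ] H' :=
    { toFun := fun y => π' y ξ₀'
      map_add' := fun y y' => by simp [map_add]
      map_smul' := fun a y => by simp [map_smul] }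
  have hdj : Dense (↑(LinearMap.range j) : Set H) := by
    have e : Submodule.span ℂ (Set.range fun x : A => π x ξ₀) = LinearMap.range j := by
      rw [show (Set.range fun x : A => π x ξ₀) = ↑(LinearMap.range j) from
        (LinearMap.coe_range j).symm]
      exact Submodule.span_eq _
    rwa [e] at hdense
  have hdj' : Dense (↑(LinearMap.range j') : Set H') := by
    have e : Submodule.span ℂ (Set.range fun y : A => π' y ξ₀') = LinearMap.range j' := by
      rw [show (Set.range fun y : A => π' y ξ₀') = ↑(LinearMap.range j') from
        (LinearMap.coe_range j').symm]
      exact Submodule.span_eq _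
    rwa [e] at hdense'
  have hdrj : DenseRange (⇑j) := by
    have e : Set.range ⇑j = ↑(LinearMap.range j) := (LinearMap.coe_range j).symm
    simpa [DenseRange, e] using hdj
  have hdrj' : DenseRange (⇑j') := by
    have e : Set.range ⇑j' = ↑(LinearMap.range j') := (LinearMap.coe_range j').symm
    simpa [DenseRange, e] using hdj'
  -- norms of the canonical vectors
  have hnorm : ∀ x : A, (φ (star x * x)).re = ‖π x ξ₀‖ ^ 2 := by
    intro x
    have h1 : φ (star x * x) = ⟪π x ξ₀, π x ξ₀⟫_ℂ := by
      rw [← hval (star x * x), map_mul, ContinuousLinearMap.mul_apply,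
        map_star, ContinuousLinearMap.star_eq_adjoint, ContinuousLinearMap.adjoint_inner_right]
    rw [h1, inner_self_eq_norm_sq_to_K]
    norm_cast
  have hnorm' : ∀ y : A, (φ' (star y * y)).re = ‖π' y ξ₀'‖ ^ 2 := by
    intro y
    have h1 : φ' (star y * y) = ⟪π' y ξ₀', π' y ξ₀'⟫_ℂ := by
      rw [← hval' (star y * y), map_mul, ContinuousLinearMap.mul_apply,
        map_star, ContinuousLinearMap.star_eq_adjoint, ContinuousLinearMap.adjoint_inner_right]
    rw [h1, inner_self_eq_norm_sq_to_K]
    norm_cast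
  constructor
  · -- forward direction
    intro φ₀ c hc hbound
    have hb : ∀ x y : A, ‖φ₀ (star y * x)‖ ≤ Real.sqrt c * ‖π x ξ₀‖ * ‖π' y ξ₀'‖ := by
      intro x y
      have h0 := hbound x y
      rw [hnorm x, hnorm' y] at h0
      have hs : (Real.sqrt c * ‖π x ξ₀‖ * ‖π' y ξ₀'‖) ^ 2
          = c * ‖π x ξ₀‖ ^ 2 * ‖π' y ξ₀'‖ ^ 2 := by
        rw [mul_pow, mul_pow, Real.sq_sqrt hc.le]
      have h2 : ‖φ₀ (star y * x)‖ ^ 2 ≤ (Real.sqrt c * ‖π x ξ₀‖ * ‖π' y ξ₀'‖) ^ 2 := by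
        rw [hs]; exact h0
      exact (pow_le_pow_iff_left₀ (norm_nonneg _) (by positivity) two_ne_zero).mp h2
    obtain ⟨S, hS⟩ := exists_rep j j' hdj hdj' (fun x y => φ₀ (star y * x))
      (fun x x' y => by simp [mul_add, map_add])
      (fun a x y => by simp [mul_smul_comm, map_smul, smul_eq_mul])
      (fun a x y => by
        simp [star_smul, smul_mul_assoc, map_smul, smul_eq_mul, Complex.star_def])
      (fun x y y' => by simp [star_add, add_mul, map_add])
      (Real.sqrt c) (Real.sqrt_nonneg c) hb
    have hS2 : ∀ x y : A, ⟪π' y ξ₀', S (π x ξ₀)⟫_ℂ = φ₀ (star y * x) := fun x y => hS x y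
    -- intertwining property
    have hint : ∀ a : A, S.comp (π a) = (π' a).comp S := by
      intro a
      apply ContinuousLinearMap.coeFn_injective
      refine Continuous.ext_on hdrj (S.continuous.comp (π a).continuous)
        ((π' a).continuous.comp S.continuous) ?_
      rintro _ ⟨x, rfl⟩
      show S (π a (π x ξ₀)) = π' a (S (π x ξ₀))
      have e1 : π a (π x ξ₀) = π (a * x) ξ₀ := by rw [map_mul]; rfl
      rw [e1]
      refine inner_ext_dense hdrj' fun y => ?_
      have e2 : (π' a).adjoint (π' y ξ₀') = π' (star a * y) ξ₀' := by
        rw [← ContinuousLinearMap.star_eq_adjoint, ← map_star, map_mul]; rfl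
      calc ⟪π' y ξ₀', S (π (a * x) ξ₀)⟫_ℂ = φ₀ (star y * (a * x)) := hS2 (a * x) y
        _ = φ₀ (star (star a * y) * x) := by rw [star_mul, star_star, mul_assoc]
        _ = ⟪π' (star a * y) ξ₀', S (π x ξ₀)⟫_ℂ := (hS2 x (star a * y)).symm
        _ = ⟪(π' a).adjoint (π' y ξ₀'), S (π x ξ₀)⟫_ℂ := by rw [e2]
        _ = ⟪π' y ξ₀', π' a (S (π x ξ₀))⟫_ℂ := ContinuousLinearMap.adjoint_inner_left _ _ _
    refine ⟨⟨S, ⟨hint, hS2⟩, ?_⟩, ?_⟩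
    · -- uniqueness
      rintro S' ⟨-, hS'val⟩
      apply ContinuousLinearMap.coeFn_injective
      refine Continuous.ext_on hdrj S'.continuous S.continuous ?_
      rintro _ ⟨x, rfl⟩
      show S' (π x ξ₀) = S (π x ξ₀)
      refine inner_ext_dense hdrj' fun y => ?_
      rw [show j' y = π' y ξ₀' from rfl, hS'val x y, hS2 x y]
    · -- norm bound
      rintro S0 ⟨-, h2⟩
      refine S0.opNorm_le_bound (Real.sqrt_nonneg c) ?_
      intro v
      refine hdrj.induction_on v ?_ ?_
      · exact isClosed_le (continuous_norm.comp S0.continuous)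
          (continuous_const.mul continuous_norm)
      · intro x
        show ‖S0 (π x ξ₀)‖ ≤ Real.sqrt c * ‖π x ξ₀‖
        have hw : ∀ w : H', ‖⟪w, S0 (π x ξ₀)⟫_ℂ‖ ≤ Real.sqrt c * ‖π x ξ₀‖ * ‖w‖ := by
          intro w
          refine hdrj'.induction_on w (isClosed_le ((continuous_id.inner continuous_const).norm)
            (continuous_const.mul continuous_norm)) ?_
          intro y
          show ‖⟪π' y ξ₀', S0 (π x ξ₀)⟫_ℂ‖ ≤ _
          rw [h2 x y]
          exact hb x y
        have h1' := hw (S0 (π x ξ₀))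
        rw [inner_self_eq_norm_sq_to_K] at h1'
        simp only [norm_pow, RCLike.norm_ofReal, abs_norm] at h1'
        rcases (norm_nonneg (S0 (π x ξ₀))).lt_or_eq with h | h
        · nlinarith
        · rw [← h]; positivity
  · -- converse direction
    intro S hint
    let φ₀ : A →ₗ[ℂ] ℂ :=
      { toFun := fun x => ⟪ξ₀', S (π x ξ₀)⟫_ℂ
        map_add' := fun x x' => by simp [map_add, inner_add_right]
        map_smul' := fun a x => by simp [map_smul, inner_smul_right] }
    have hmain : ∀ x y : A, ⟪π' y ξ₀', S (π x ξ₀)⟫_ℂ = φ₀ (star y * x) := by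
      intro x y
      show _ = ⟪ξ₀', S (π (star y * x) ξ₀)⟫_ℂ
      have e1 : π (star y * x) ξ₀ = π (star y) (π x ξ₀) := by rw [map_mul]; rfl
      have e2 : S (π (star y) (π x ξ₀)) = π' (star y) (S (π x ξ₀)) :=
        ContinuousLinearMap.ext_iff.mp (hint (star y)) (π x ξ₀)
      rw [e1, e2, map_star, ContinuousLinearMap.star_eq_adjoint,
        ContinuousLinearMap.adjoint_inner_right]
    refine ⟨⟨φ₀, hmain, ?_⟩, ?_⟩
    · -- uniqueness of φ₀
      intro ψ hψ
      refine LinearMap.ext fun x => ?_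
      have h1 := hψ x 1
      have h2 := hmain x 1
      rw [h2] at h1
      simpa using h1.symm
    · -- norm bound on φ₀
      intro ψ hψ x y
      rw [← hψ x y, hnorm x, hnorm' y]
      have h3 : ‖⟪π' y ξ₀', S (π x ξ₀)⟫_ℂ‖ ≤ ‖π' y ξ₀'‖ * (‖S‖ * ‖π x ξ₀‖) :=
        le_trans (norm_inner_le_norm _ _)
          (mul_le_mul_of_nonneg_left (S.le_opNorm _) (norm_nonneg _))
      calc ‖⟪π' y ξ₀', S (π x ξ₀)⟫_ℂ‖ ^ 2 ≤ (‖π' y ξ₀'‖ * (‖S‖ * ‖π x ξ₀‖)) ^ 2 :=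
            pow_le_pow_left₀ (norm_nonneg _) h3 2
        _ = ‖S‖ ^ 2 * ‖π x ξ₀‖ ^ 2 * ‖π' y ξ₀'‖ ^ 2 := by ring
end
end

section
/- Let A be a (unital) C*-algebra, let φ, φ' be positive linear functionals on A with φ'(x) ≤ c φ(x) for all positive x ∈ A and some c > 0, and let (H_φ, π_φ, ξ₀) be a GNS representation of φ. Then there exists a unique positive bounded linear operator S on H_φ commuting with π_φ(x) for every x ∈ A such that ⟨S π_φ(x) ξ₀, π_φ(y) ξ₀⟩ = φ'(y*x) for all x, y ∈ A. Conversely, for any positive bounded operator S in the commutant of π_φ(A), there is a unique positive linear functional φ' on A such that ⟨S π_φ(x) ξ₀, π_φ(y) ξ₀⟩ = φ'(y*x) for all x, y ∈ A, and it satisfies φ'(x) ≤ ‖S‖ φ(x) for all positive x ∈ A. -/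
open scoped InnerProductSpace ComplexOrder Classical
open Complex

noncomputable section

variable {A : Type*} [NormedRing A] [StarRing A] [CStarRing A]
  [NormedAlgebra ℂ A] [StarModule ℂ A] [CompleteSpace A]

set_option linter.unusedSectionVars false in
/-- Descend a linear map along the range of another linear map. -/
def LinearMap.onRange' {M N P : Type*} [AddCommGroup M] [Module ℂ M]
    [AddCommGroup N] [Module ℂ N] [AddCommGroup P] [Module ℂ P]
    (T : M →ₗ[ℂ] N) (L : M →ₗ[ℂ] P) (h : LinearMap.ker T ≤ LinearMap.ker L) :
    LinearMap.range T →ₗ[ℂ] P :=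
  ((LinearMap.ker T).liftQ L h).comp T.quotKerEquivRange.symm.toLinearMap

lemma LinearMap.onRange'_apply {M N P : Type*} [AddCommGroup M] [Module ℂ M]
    [AddCommGroup N] [Module ℂ N] [AddCommGroup P] [Module ℂ P]
    (T : M →ₗ[ℂ] N) (L : M →ₗ[ℂ] P) (h : LinearMap.ker T ≤ LinearMap.ker L)
    (x : M) (hx : T x ∈ LinearMap.range T) :
    LinearMap.onRange' T L h ⟨T x, hx⟩ = L x := by
  simp [LinearMap.onRange', LinearMap.quotKerEquivRange_symm_apply_image,
    Submodule.liftQ_apply, Submodule.mkQ_apply]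

set_option linter.unusedSectionVars false in
lemma pos_func_im (ψ : A →ₗ[ℂ] ℂ) (hψ : ∀ x : A, 0 ≤ ψ (star x * x)) (x : A) :
    (ψ (star x * x)).im = 0 := ((Complex.le_def.mp (hψ x)).2).symm

set_option linter.unusedSectionVars false in
lemma pos_func_conj (ψ : A →ₗ[ℂ] ℂ) (hψ : ∀ x : A, 0 ≤ ψ (star x * x)) (x y : A) :
    (starRingEnd ℂ) (ψ (star x * y)) = ψ (star y * x) := by
  have expand : ∀ a b : A, star (a + b) * (a + b)
      = star a * a + (star a * b + (star b * a + star b * b)) := by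
    intro a b; simp [star_add, add_mul, mul_add]; abel
  have h1 : (ψ (star x * y) + ψ (star y * x)).im = 0 := by
    have h := pos_func_im ψ hψ (x + y)
    rw [expand, map_add, map_add, map_add] at h
    have hx := pos_func_im ψ hψ x
    have hy := pos_func_im ψ hψ y
    simp only [Complex.add_im] at h ⊢
    linarith
  have h2 : (ψ (star y * x)).re - (ψ (star x * y)).re = 0 := by
    have h := pos_func_im ψ hψ (x + Complex.I • y)
    rw [expand] at h
    have e2 : star x * (Complex.I • y) = Complex.I • (star x * y) := mul_smul_comm _ _ _
    have e3 : star (Complex.I • y) * x = (-Complex.I) • (star y * x) := by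
      simp [star_smul, smul_mul_assoc, Complex.star_def, Complex.conj_I]
    have e4 : star (Complex.I • y) * (Complex.I • y) = star y * y := by
      simp [star_smul, smul_mul_assoc, mul_smul_comm, smul_smul, Complex.star_def,
        Complex.conj_I]
    rw [e2, e3, e4, map_add, map_add, map_add, map_smul, map_smul] at h
    have hx := pos_func_im ψ hψ x
    have hy := pos_func_im ψ hψ y
    simp only [Complex.add_im, smul_eq_mul, Complex.mul_im, Complex.I_re, Complex.I_im,
      Complex.neg_re, Complex.neg_im] at h
    linarith
  apply Complex.ext
  · simpa using by linarith
  · simp only [Complex.conj_im]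
    have := Complex.add_im (ψ (star x * y)) (ψ (star y * x))
    linarith [h1]

set_option linter.unusedSectionVars false in
lemma pos_func_cs (ψ : A →ₗ[ℂ] ℂ) (hψ : ∀ x : A, 0 ≤ ψ (star x * x)) (x y : A) :
    ‖ψ (star y * x)‖ ^ 2 ≤ (ψ (star x * x)).re * (ψ (star y * y)).re := by
  letI core : PreInnerProductSpace.Core ℂ A :=
    { inner := fun a b => ψ (star a * b)
      conj_inner_symm := fun a b => pos_func_conj ψ hψ b a
      re_inner_nonneg := fun a => by
        have := (Complex.le_def.mp (hψ a)).1
        simpa using this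
      add_left := fun a b c => by simp [star_add, add_mul]
      smul_left := fun a b r => by
        simp [star_smul, smul_mul_assoc, Complex.star_def] }
  have key : ‖ψ (star y * x)‖ * ‖ψ (star x * y)‖
      ≤ RCLike.re (ψ (star y * y)) * RCLike.re (ψ (star x * x)) :=
    InnerProductSpace.Core.inner_mul_inner_self_le (𝕜 := ℂ) (F := A) y x
  have hnorm : ‖ψ (star x * y)‖ = ‖ψ (star y * x)‖ := by
    rw [← pos_func_conj ψ hψ y x]; exact RCLike.norm_conj _
  rw [hnorm, ← sq] at key
  simpa [mul_comm] using key


/-- Positive operators in the commutant of a GNS representation of `φ` correspond to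
positive functionals dominated by a multiple of `φ`. -/
theorem gns_commutant_positive_operators (φ φ' : A →ₗ[ℂ] ℂ)
    (hφ : ∀ x : A, 0 ≤ φ (star x * x)) (hφ' : ∀ x : A, 0 ≤ φ' (star x * x))
    {H : Type*} [NormedAddCommGroup H] [InnerProductSpace ℂ H] [CompleteSpace H]
    (π : A →⋆ₐ[ℂ] (H →L[ℂ] H)) (ξ₀ : H) (hrep : IsGNSRep φ π ξ₀) :
    (∀ c : ℝ, 0 < c → (∀ y : A, φ' (star y * y) ≤ (c : ℂ) * φ (star y * y)) →
      ∃! S : H →L[ℂ] H,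
        IsPositiveOp S ∧ (∀ x : A, S.comp (π x) = (π x).comp S) ∧
          (∀ x y : A, ⟪π y ξ₀, S (π x ξ₀)⟫_ℂ = φ' (star y * x))) ∧
    (∀ S : H →L[ℂ] H, IsPositiveOp S → (∀ x : A, S.comp (π x) = (π x).comp S) →
      (∃! ψ : A →ₗ[ℂ] ℂ, ∀ x y : A, ⟪π y ξ₀, S (π x ξ₀)⟫_ℂ = ψ (star y * x)) ∧
      (∀ ψ : A →ₗ[ℂ] ℂ, (∀ x y : A, ⟪π y ξ₀, S (π x ξ₀)⟫_ℂ = ψ (star y * x)) →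
        (∀ x : A, 0 ≤ ψ (star x * x)) ∧
          ∀ y : A, ψ (star y * y) ≤ (‖S‖ : ℂ) * φ (star y * y))) := by
  obtain ⟨hdense, hGNS⟩ := hrep
  set T : A →ₗ[ℂ] H :=
    ((ContinuousLinearMap.apply ℂ H ξ₀).toLinearMap).comp π.toAlgHom.toLinearMap with hTdef
  have Tdef : ∀ x : A, T x = π x ξ₀ := fun _ => rfl
  have hD : Dense (↑(LinearMap.range T) : Set H) := by
    have : Submodule.span ℂ (Set.range fun x : A => π x ξ₀) = LinearMap.range T := by
      rw [show (Set.range fun x : A => π x ξ₀) = Set.range ⇑T from rfl,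
        ← LinearMap.coe_range, Submodule.span_eq]
    rwa [this] at hdense
  have huniq : ∀ v w : H, (∀ y : A, ⟪T y, v⟫_ℂ = ⟪T y, w⟫_ℂ) → v = w := by
    intro v w h
    refine hD.eq_of_inner_right ℂ fun d hd => ?_
    obtain ⟨y, hy⟩ := LinearMap.mem_range.mp hd
    rw [← hy]; exact h y
  have hTnorm : ∀ x : A, φ (star x * x) = (‖T x‖ : ℂ) ^ 2 := by
    intro x
    rw [← hGNS (star x * x), map_mul, ContinuousLinearMap.mul_apply, map_star,
      ContinuousLinearMap.star_eq_adjoint, ContinuousLinearMap.adjoint_inner_right,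
      inner_self_eq_norm_sq_to_K, ← Tdef]
    rfl
  constructor
  · -- existence and uniqueness of S given φ' ≤ c φ
    intro c hc hle
    have hre : ∀ x : A, (φ' (star x * x)).re ≤ c * ‖T x‖ ^ 2 := by
      intro x
      have h := (Complex.le_def.mp (hle x)).1
      rw [hTnorm x] at h
      have : ((c : ℂ) * (‖T x‖ : ℂ) ^ 2).re = c * ‖T x‖ ^ 2 := by
        push_cast
        simp [← Complex.ofReal_pow, ← Complex.ofReal_mul]
      rwa [this] at h
    have hCS : ∀ x y : A, ‖φ' (star y * x)‖ ≤ c * ‖T x‖ * ‖T y‖ := by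
      intro x y
      have h1 := pos_func_cs φ' hφ' x y
      have hnn : 0 ≤ (φ' (star y * y)).re := by
        have := (Complex.le_def.mp (hφ' y)).1; simpa using this
      have h2 : (φ' (star x * x)).re * (φ' (star y * y)).re
          ≤ (c * ‖T x‖ ^ 2) * (c * ‖T y‖ ^ 2) := by
        apply mul_le_mul (hre x) (hre y) hnn
        positivity
      have h3 : ‖φ' (star y * x)‖ ^ 2 ≤ (c * ‖T x‖ * ‖T y‖) ^ 2 := by nlinarith
      have h4 := Real.sqrt_le_sqrt h3
      rwa [Real.sqrt_sq (norm_nonneg _), Real.sqrt_sq (by positivity)] at h4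
    have hw : ∀ x : A, ∃ v : H,
        (∀ y : A, ⟪T y, v⟫_ℂ = φ' (star y * x)) ∧ ‖v‖ ≤ c * ‖T x‖ := by
      intro x
      let Lx : A →ₗ[ℂ] ℂ :=
        { toFun := fun y => (starRingEnd ℂ) (φ' (star y * x))
          map_add' := fun a b => by simp [star_add, add_mul]
          map_smul' := fun r a => by
            simp [star_smul, smul_mul_assoc, Complex.star_def] }
      have hLx : ∀ y : A, Lx y = (starRingEnd ℂ) (φ' (star y * x)) := fun _ => rfl
      have hkerx : LinearMap.ker T ≤ LinearMap.ker Lx := by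
        intro y hy
        rw [LinearMap.mem_ker] at hy ⊢
        have hb := hCS x y
        rw [hy, norm_zero, mul_zero] at hb
        have : φ' (star y * x) = 0 :=
          norm_le_zero_iff.mp hb
        rw [hLx, this, map_zero]
      let ℓ : ↥(LinearMap.range T) →ₗ[ℂ] ℂ := LinearMap.onRange' T Lx hkerx
      have hℓb : ∀ d : ↥(LinearMap.range T), ‖ℓ d‖ ≤ (c * ‖T x‖) * ‖d‖ := by
        rintro ⟨d, hd⟩
        obtain ⟨y, rfl⟩ := LinearMap.mem_range.mp hd
        rw [show (⟨T y, hd⟩ : ↥(LinearMap.range T)) = ⟨T y, LinearMap.mem_range_self T y⟩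
          from rfl]
        rw [LinearMap.onRange'_apply, hLx]
        have : ‖(starRingEnd ℂ) (φ' (star y * x))‖ = ‖φ' (star y * x)‖ := RCLike.norm_conj _
        rw [this]
        have hnd : ‖(⟨T y, LinearMap.mem_range_self T y⟩ : ↥(LinearMap.range T))‖ = ‖T y‖ := rfl
        rw [hnd]
        exact hCS x y
      let ℓc : ↥(LinearMap.range T) →L[ℂ] ℂ := ℓ.mkContinuous (c * ‖T x‖) hℓb
      obtain ⟨g, hg, hgnorm⟩ := exists_extension_norm_eq (LinearMap.range T) ℓc
      refine ⟨(InnerProductSpace.toDual ℂ H).symm g, fun y => ?_, ?_⟩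
      · have h1 : ⟪(InnerProductSpace.toDual ℂ H).symm g, T y⟫_ℂ = g (T y) :=
          InnerProductSpace.toDual_symm_apply
        have h2 : g (T y) = (starRingEnd ℂ) (φ' (star y * x)) := by
          have := hg ⟨T y, LinearMap.mem_range_self T y⟩
          rw [show ((⟨T y, LinearMap.mem_range_self T y⟩ : ↥(LinearMap.range T)) : H) = T y
            from rfl] at this
          rw [this]
          show ℓ _ = _
          rw [LinearMap.onRange'_apply, hLx]
        rw [← inner_conj_symm, h1, h2, Complex.conj_conj]
      · rw [LinearIsometryEquiv.norm_map, hgnorm]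
        exact ℓ.mkContinuous_norm_le (by positivity) hℓb
    choose w hw1 hw2 using hw
    let W : A →ₗ[ℂ] H :=
      { toFun := w
        map_add' := fun a b => huniq _ _ fun y => by
          rw [hw1, mul_add, map_add, inner_add_right, hw1, hw1]
        map_smul' := fun r a => huniq _ _ fun y => by
          rw [hw1, RingHom.id_apply, inner_smul_right, hw1, mul_smul_comm, map_smul,
            smul_eq_mul] }
    have hkerW : LinearMap.ker T ≤ LinearMap.ker W := by
      intro x hx
      rw [LinearMap.mem_ker] at hx ⊢
      refine huniq _ _ fun y => ?_
      have hb := hCS x y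
      rw [hx, norm_zero, mul_zero, zero_mul] at hb
      have h0 : φ' (star y * x) = 0 := norm_le_zero_iff.mp hb
      show ⟪T y, w x⟫_ℂ = ⟪T y, (0 : H)⟫_ℂ
      rw [hw1, h0, inner_zero_right]
    let f0 : ↥(LinearMap.range T) →ₗ[ℂ] H := LinearMap.onRange' T W hkerW
    have hf0b : ∀ d : ↥(LinearMap.range T), ‖f0 d‖ ≤ c * ‖d‖ := by
      rintro ⟨d, hd⟩
      obtain ⟨x, rfl⟩ := LinearMap.mem_range.mp hd
      rw [show (⟨T x, hd⟩ : ↥(LinearMap.range T)) = ⟨T x, LinearMap.mem_range_self T x⟩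
        from rfl]
      rw [LinearMap.onRange'_apply]
      show ‖w x‖ ≤ c * ‖T x‖
      exact hw2 x
    let fc : ↥(LinearMap.range T) →L[ℂ] H := f0.mkContinuous c hf0b
    have hui : IsUniformInducing ((LinearMap.range T).subtypeL : ↥(LinearMap.range T) →L[ℂ] H) :=
      isometry_subtype_coe.isUniformInducing
    have hde : DenseRange ((LinearMap.range T).subtypeL : ↥(LinearMap.range T) →L[ℂ] H) := by
      have : Set.range ((LinearMap.range T).subtypeL : ↥(LinearMap.range T) →L[ℂ] H)
          = (↑(LinearMap.range T) : Set H) := Subtype.range_coe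
      rw [DenseRange, this]
      exact hD
    let S : H →L[ℂ] H := fc.extend (LinearMap.range T).subtypeL
    have hS : ∀ x : A, S (T x) = w x := by
      intro x
      have h1 := ContinuousLinearMap.extend_eq fc hde hui
        ⟨T x, LinearMap.mem_range_self T x⟩
      rw [show ((LinearMap.range T).subtypeL ⟨T x, LinearMap.mem_range_self T x⟩) = T x
        from rfl] at h1
      rw [h1]
      show f0 _ = w x
      rw [LinearMap.onRange'_apply]
      rfl
    have hkey : ∀ x y : A, ⟪π y ξ₀, S (π x ξ₀)⟫_ℂ = φ' (star y * x) := by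
      intro x y
      show ⟪T y, S (T x)⟫_ℂ = _
      rw [hS, hw1]
    have hcomm : ∀ a : A, S.comp (π a) = (π a).comp S := by
      intro a
      apply ContinuousLinearMap.coeFn_injective
      refine Continuous.ext_on hD (S.comp (π a)).continuous ((π a).comp S).continuous ?_
      intro v hv
      obtain ⟨x, rfl⟩ := LinearMap.mem_range.mp hv
      show S (π a (T x)) = π a (S (T x))
      have h1 : π a (T x) = T (a * x) := by
        rw [Tdef, Tdef, map_mul, ContinuousLinearMap.mul_apply]
      rw [h1, hS, hS]
      refine huniq _ _ fun y => ?_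
      rw [hw1]
      have hTy : T (star a * y) = π (star a) (T y) := by
        rw [Tdef, Tdef, map_mul, ContinuousLinearMap.mul_apply]
      have h2 : ⟪T y, π a (w x)⟫_ℂ = ⟪T (star a * y), w x⟫_ℂ := by
        rw [hTy]
        have hadj : π (star a) = ContinuousLinearMap.adjoint (π a) := by
          rw [map_star, ContinuousLinearMap.star_eq_adjoint]
        rw [hadj, ContinuousLinearMap.adjoint_inner_left]
      rw [h2, hw1, star_mul, star_star, mul_assoc]
    have hpos : IsPositiveOp S := by
      intro v
      have hsub : (↑(LinearMap.range T) : Set H) ⊆ {u : H | 0 ≤ ⟪u, S u⟫_ℂ} := by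
        intro u hu
        obtain ⟨x, rfl⟩ := LinearMap.mem_range.mp hu
        show 0 ≤ ⟪T x, S (T x)⟫_ℂ
        rw [hS, hw1]
        exact hφ' x
      have hclosed : IsClosed {u : H | 0 ≤ ⟪u, S u⟫_ℂ} := by
        have heq : {u : H | 0 ≤ ⟪u, S u⟫_ℂ}
            = (fun u : H => ⟪u, S u⟫_ℂ) ⁻¹' {z : ℂ | 0 ≤ z} := rfl
        rw [heq]
        apply IsClosed.preimage (continuous_id.inner S.continuous)
        have hz : {z : ℂ | 0 ≤ z} = Complex.re ⁻¹' Set.Ici 0 ∩ Complex.im ⁻¹' {0} := by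
          ext z
          simp [Complex.le_def, eq_comm]
        rw [hz]
        exact (IsClosed.preimage Complex.continuous_re isClosed_Ici).inter
          (IsClosed.preimage Complex.continuous_im isClosed_singleton)
      have hall : closure (↑(LinearMap.range T) : Set H) ⊆ {u : H | 0 ≤ ⟪u, S u⟫_ℂ} :=
        hclosed.closure_subset_iff.mpr hsub
      rw [hD.closure_eq] at hall
      exact hall (Set.mem_univ v)
    refine ⟨S, ⟨hpos, hcomm, hkey⟩, ?_⟩
    rintro S' ⟨-, -, hkey'⟩
    apply ContinuousLinearMap.coeFn_injective
    refine Continuous.ext_on hD S'.continuous S.continuous ?_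
    intro v hv
    obtain ⟨x, rfl⟩ := LinearMap.mem_range.mp hv
    show S' (T x) = S (T x)
    refine huniq _ _ fun y => ?_
    rw [show ⟪T y, S' (T x)⟫_ℂ = φ' (star y * x) from hkey' x y,
      show ⟪T y, S (T x)⟫_ℂ = φ' (star y * x) from hkey x y]
  · -- the converse direction
    intro S hSpos hScomm
    have hadj : ∀ (a : A) (u v : H), ⟪u, π (star a) v⟫_ℂ = ⟪π a u, v⟫_ℂ := by
      intro a u v
      have h : π (star a) = ContinuousLinearMap.adjoint (π a) := by
        rw [map_star, ContinuousLinearMap.star_eq_adjoint]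
      rw [h, ContinuousLinearMap.adjoint_inner_right]
    let ψ0 : A →ₗ[ℂ] ℂ :=
      { toFun := fun x => ⟪ξ₀, S (π x ξ₀)⟫_ℂ
        map_add' := fun a b => by
          simp [map_add, ContinuousLinearMap.add_apply, inner_add_right]
        map_smul' := fun r a => by
          simp [map_smul, ContinuousLinearMap.smul_apply, inner_smul_right] }
    have hψ0 : ∀ x y : A, ⟪π y ξ₀, S (π x ξ₀)⟫_ℂ = ψ0 (star y * x) := by
      intro x y
      show _ = ⟪ξ₀, S (π (star y * x) ξ₀)⟫_ℂ
      rw [map_mul, ContinuousLinearMap.mul_apply]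
      have hc : S (π (star y) (π x ξ₀)) = π (star y) (S (π x ξ₀)) := by
        have := ContinuousLinearMap.ext_iff.mp (hScomm (star y)) (π x ξ₀)
        simpa using this
      rw [hc, hadj]
    constructor
    · refine ⟨ψ0, fun x y => hψ0 x y, ?_⟩
      intro ψ' hψ'
      apply LinearMap.ext; intro x
      have h1 := hψ' x 1
      have h2 := hψ0 x 1
      rw [star_one, one_mul] at h1 h2
      rw [← h1, h2]
    · intro ψ hψ
      constructor
      · intro x
        rw [← hψ x x]
        exact hSpos (π x ξ₀)
      · intro y
        rw [← hψ y y, hTnorm y]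
        have him : (⟪π y ξ₀, S (π y ξ₀)⟫_ℂ).im = 0 := ((Complex.le_def.mp (hSpos _)).2).symm
        have hre : (⟪π y ξ₀, S (π y ξ₀)⟫_ℂ).re ≤ ‖S‖ * ‖T y‖ ^ 2 := by
          calc (⟪π y ξ₀, S (π y ξ₀)⟫_ℂ).re
              ≤ ‖⟪π y ξ₀, S (π y ξ₀)⟫_ℂ‖ := Complex.re_le_norm _
            _ ≤ ‖π y ξ₀‖ * ‖S (π y ξ₀)‖ := norm_inner_le_norm _ _
            _ ≤ ‖π y ξ₀‖ * (‖S‖ * ‖π y ξ₀‖) := by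
                gcongr
                exact S.le_opNorm _
            _ = ‖S‖ * ‖T y‖ ^ 2 := by rw [Tdef]; ring
        rw [Complex.le_def]
        constructor
        · have : ((‖S‖ : ℂ) * (‖T y‖ : ℂ) ^ 2).re = ‖S‖ * ‖T y‖ ^ 2 := by
            rw [← Complex.ofReal_pow, ← Complex.ofReal_mul, Complex.ofReal_re]
          rw [this]
          exact hre
        · rw [him, ← Complex.ofReal_pow, ← Complex.ofReal_mul, Complex.ofReal_im]
end
end

section
/- Let G be a group, and let K, K' be positive definite maps on G satisfying K(x,y) = K(zx,zy) and K'(x,y) = K'(zx,zy) for all x, y, z ∈ G, with associated cyclic unitary representations (H_K, π_K, ξ₀) and (H_{K'}, π_{K'}, ξ₀'). Let L : G × G → ℂ with L² ≤ c K K' for some c > 0. If L(x,y) = L(zx,zy) for all x, y, z ∈ G, then there is a unique bounded linear operator S : H_K → H_{K'} such that S π_K(x) = π_{K'}(x) S for all x ∈ G and ⟨S π_K(x) ξ₀, π_{K'}(y) ξ₀'⟩ = L(x,y) for all x, y ∈ G; moreover ‖S‖ ≤ √c. Conversely, if S : H_K → H_{K'} is a bounded linear operator satisfying S π_K(x) =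 π_{K'}(x) S for all x ∈ G, then there is a unique L : G × G → ℂ with ⟨S π_K(x) ξ₀, π_{K'}(y) ξ₀'⟩ = L(x,y) for all x, y ∈ G; in addition L satisfies L(x,y) = L(zx,zy) for all x, y, z ∈ G and L² ≤ ‖S‖² K K'. -/
open scoped InnerProductSpace ComplexOrder Classical
open Complex

noncomputable section

/-- `(H, π, ξ₀)` is the cyclic unitary representation associated to the group positive
definite map `K`. -/
def IsGroupCyclicRep {G : Type*} [Group G] (K : G → G → ℂ)
    {H : Type*} [NormedAddCommGroup H] [InnerProductSpace ℂ H]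
    (π : G →* (H ≃ₗᵢ[ℂ] H)) (ξ₀ : H) : Prop :=
  Dense (↑(Submodule.span ℂ (Set.range fun g : G => π g ξ₀)) : Set H) ∧
    ∀ x y : G, ⟪π y ξ₀, π x ξ₀⟫_ℂ = K x y

namespace DutkayAux

variable {G : Type*}

/-- The canonical sesquilinear pairing of two finitely supported families through `L`. -/
def Bsum (L : G → G → ℂ) (f g : G →₀ ℂ) : ℂ :=
  ∑ x ∈ f.support, ∑ y ∈ g.support, L x y * f x * (starRingEnd ℂ) (g y)

lemma Bsum_eq (L : G → G → ℂ) (f g : G →₀ ℂ) {s t : Finset G}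
    (hs : f.support ⊆ s) (ht : g.support ⊆ t) :
    Bsum L f g = ∑ x ∈ s, ∑ y ∈ t, L x y * f x * (starRingEnd ℂ) (g y) := by
  unfold Bsum
  have h1 : ∀ x : G, ∑ y ∈ g.support, L x y * f x * (starRingEnd ℂ) (g y)
      = ∑ y ∈ t, L x y * f x * (starRingEnd ℂ) (g y) := by
    intro x
    refine Finset.sum_subset ht fun y _ hy => ?_
    simp [Finsupp.notMem_support_iff.mp hy]
  rw [Finset.sum_congr rfl fun x _ => h1 x]
  refine Finset.sum_subset hs fun x _ hx => ?_
  simp [Finsupp.notMem_support_iff.mp hx]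

lemma Bsum_add_left (L : G → G → ℂ) (f₁ f₂ g : G →₀ ℂ) :
    Bsum L (f₁ + f₂) g = Bsum L f₁ g + Bsum L f₂ g := by
  classical
  rw [Bsum_eq L (f₁ + f₂) g (s := f₁.support ∪ f₂.support) Finsupp.support_add subset_rfl,
    Bsum_eq L f₁ g (s := f₁.support ∪ f₂.support) Finset.subset_union_left subset_rfl,
    Bsum_eq L f₂ g (s := f₁.support ∪ f₂.support) Finset.subset_union_right subset_rfl,
    ← Finset.sum_add_distrib]
  refine Finset.sum_congr rfl fun x _ => ?_
  rw [← Finset.sum_add_distrib]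
  refine Finset.sum_congr rfl fun y _ => ?_
  simp only [Finsupp.add_apply]
  ring

lemma Bsum_smul_left (L : G → G → ℂ) (a : ℂ) (f g : G →₀ ℂ) :
    Bsum L (a • f) g = a * Bsum L f g := by
  rw [Bsum_eq L (a • f) g (s := f.support) Finsupp.support_smul subset_rfl,
    Bsum, Finset.mul_sum]
  refine Finset.sum_congr rfl fun x _ => ?_
  rw [Finset.mul_sum]
  refine Finset.sum_congr rfl fun y _ => ?_
  simp only [Finsupp.smul_apply, smul_eq_mul]
  ring

lemma Bsum_add_right (L : G → G → ℂ) (f g₁ g₂ : G →₀ ℂ) :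
    Bsum L f (g₁ + g₂) = Bsum L f g₁ + Bsum L f g₂ := by
  classical
  rw [Bsum_eq L f (g₁ + g₂) (t := g₁.support ∪ g₂.support) subset_rfl Finsupp.support_add,
    Bsum_eq L f g₁ (t := g₁.support ∪ g₂.support) subset_rfl Finset.subset_union_left,
    Bsum_eq L f g₂ (t := g₁.support ∪ g₂.support) subset_rfl Finset.subset_union_right,
    ← Finset.sum_add_distrib]
  refine Finset.sum_congr rfl fun x _ => ?_
  rw [← Finset.sum_add_distrib]
  refine Finset.sum_congr rfl fun y _ => ?_
  simp only [Finsupp.add_apply, map_add]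
  ring

lemma Bsum_smul_right (L : G → G → ℂ) (a : ℂ) (f g : G →₀ ℂ) :
    Bsum L f (a • g) = (starRingEnd ℂ) a * Bsum L f g := by
  rw [Bsum_eq L f (a • g) (t := g.support) subset_rfl Finsupp.support_smul,
    Bsum, Finset.mul_sum]
  refine Finset.sum_congr rfl fun x _ => ?_
  rw [Finset.mul_sum]
  refine Finset.sum_congr rfl fun y _ => ?_
  simp only [Finsupp.smul_apply, smul_eq_mul, map_mul]
  ring

lemma Bsum_single (L : G → G → ℂ) (x y : G) :
    Bsum L (Finsupp.single x 1) (Finsupp.single y 1) = L x y := by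
  classical
  rw [Bsum_eq L _ _ (s := {x}) (t := {y}) Finsupp.support_single_subset
    Finsupp.support_single_subset]
  simp

lemma Bsum_mapDomain_left (L : G → G → ℂ) {h : G → G} (hinj : Function.Injective h)
    (f g : G →₀ ℂ) :
    Bsum L (Finsupp.mapDomain h f) g
      = ∑ x ∈ f.support, ∑ y ∈ g.support, L (h x) y * f x * (starRingEnd ℂ) (g y) := by
  classical
  rw [Bsum_eq L _ g (s := f.support.image h)
    (le_of_eq (Finsupp.mapDomain_support_of_injective hinj f)) subset_rfl,
    Finset.sum_image (fun a _ b _ hab => hinj hab)]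
  refine Finset.sum_congr rfl fun x _ => Finset.sum_congr rfl fun y _ => ?_
  rw [Finsupp.mapDomain_apply hinj]

lemma Bsum_mapDomain_right (L : G → G → ℂ) {h : G → G} (hinj : Function.Injective h)
    (f g : G →₀ ℂ) :
    Bsum L f (Finsupp.mapDomain h g)
      = ∑ x ∈ f.support, ∑ y ∈ g.support, L x (h y) * f x * (starRingEnd ℂ) (g y) := by
  classical
  rw [Bsum_eq L f _ (t := g.support.image h) subset_rfl
    (le_of_eq (Finsupp.mapDomain_support_of_injective hinj g))]
  refine Finset.sum_congr rfl fun x _ => ?_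
  rw [Finset.sum_image (fun a _ b _ hab => hinj hab)]
  refine Finset.sum_congr rfl fun y _ => ?_
  rw [Finsupp.mapDomain_apply hinj]

lemma sum_enum (f : G →₀ ℂ) {M : Type*} [AddCommMonoid M] (F : G → M) :
    ∑ a ∈ f.support, F a
      = ∑ i : Fin f.support.card, F ((f.support.equivFin.symm i : G)) := by
  rw [← Finset.sum_coe_sort f.support F]
  exact (Equiv.sum_comp f.support.equivFin.symm fun a : ↥f.support => F ↑a).symm

lemma real_sqrt_bound {a b c d : ℝ} (hc : 0 ≤ c) (ha : 0 ≤ a) (hb : 0 ≤ b) (hd : 0 ≤ d)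
    (h : a ^ 2 ≤ c * b ^ 2 * d ^ 2) : a ≤ Real.sqrt c * b * d := by
  have h2 : a ^ 2 ≤ (Real.sqrt c * b * d) ^ 2 := by
    rw [mul_pow, mul_pow, Real.sq_sqrt hc]; exact h
  calc a = Real.sqrt (a ^ 2) := by rw [Real.sqrt_sq ha]
    _ ≤ Real.sqrt ((Real.sqrt c * b * d) ^ 2) := Real.sqrt_le_sqrt h2
    _ = Real.sqrt c * b * d := Real.sqrt_sq (by positivity)


variable {H : Type*} [NormedAddCommGroup H] [InnerProductSpace ℂ H]
variable {H' : Type*} [NormedAddCommGroup H'] [InnerProductSpace ℂ H']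

lemma quad_inner {K : G → G → ℂ} {v : G → H} (hv : ∀ x y, ⟪v y, v x⟫_ℂ = K x y)
    {n : ℕ} (x : Fin n → G) (ξ : Fin n → ℂ) :
    ∑ i, ∑ j, K (x i) (x j) * ξ i * (starRingEnd ℂ) (ξ j)
      = ⟪∑ j, ξ j • v (x j), ∑ i, ξ i • v (x i)⟫_ℂ := by
  rw [Finset.sum_comm]
  simp_rw [sum_inner, inner_sum, inner_smul_left, inner_smul_right, hv]
  exact Finset.sum_congr rfl fun j _ => Finset.sum_congr rfl fun i _ => by ring

lemma quad_re {K : G → G → ℂ} {v : G → H} (hv : ∀ x y, ⟪v y, v x⟫_ℂ = K x y)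
    {n : ℕ} (x : Fin n → G) (ξ : Fin n → ℂ) :
    (∑ i, ∑ j, K (x i) (x j) * ξ i * (starRingEnd ℂ) (ξ j)).re
      = ‖∑ i, ξ i • v (x i)‖ ^ 2 := by
  rw [quad_inner hv, inner_self_eq_norm_sq_to_K]
  norm_cast

lemma pair_inner {L : G → G → ℂ} {v : G → H} {w : G → H'} (S : H →L[ℂ] H')
    (hS : ∀ x y, ⟪w y, S (v x)⟫_ℂ = L x y)
    {m n : ℕ} (x : Fin m → G) (y : Fin n → G) (ξ : Fin m → ℂ) (η : Fin n → ℂ) :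
    ∑ i, ∑ j, L (x i) (y j) * ξ i * (starRingEnd ℂ) (η j)
      = ⟪∑ j, η j • w (y j), S (∑ i, ξ i • v (x i))⟫_ℂ := by
  rw [Finset.sum_comm, map_sum]
  simp_rw [map_smul, sum_inner, inner_sum, inner_smul_left, inner_smul_right, hS]
  exact Finset.sum_congr rfl fun j _ => Finset.sum_congr rfl fun i _ => by ring

lemma eq_of_inner_gen {w : G → H'}
    (hdense : Dense (↑(Submodule.span ℂ (Set.range w)) : Set H')) {a b : H'}
    (h : ∀ y : G, ⟪w y, a⟫_ℂ = ⟪w y, b⟫_ℂ) : a = b := by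
  have key : ∀ u ∈ Submodule.span ℂ (Set.range w), ⟪a - b, u⟫_ℂ = 0 := by
    intro u hu
    induction hu using Submodule.span_induction with
    | mem u hu =>
      obtain ⟨y, rfl⟩ := hu
      rw [inner_sub_left]
      have := h y
      rw [← inner_conj_symm a, ← inner_conj_symm b, this]
      simp
    | zero => exact inner_zero_right _
    | add u₁ u₂ _ _ h₁ h₂ => rw [inner_add_right, h₁, h₂, add_zero]
    | smul c u _ h₁ => rw [inner_smul_right, h₁, mul_zero]
  have : a - b = 0 :=
    Dense.eq_zero_of_inner_left ℂ hdense fun u hu => key u hu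
  exact sub_eq_zero.mp this


variable {G : Type*} [Group G]

lemma ext_of_inner {v : G → H} {w : G → H'}
    (hd : Dense (↑(Submodule.span ℂ (Set.range v)) : Set H))
    (hd' : Dense (↑(Submodule.span ℂ (Set.range w)) : Set H'))
    (S S' : H →L[ℂ] H')
    (h : ∀ x y : G, ⟪w y, S (v x)⟫_ℂ = ⟪w y, S' (v x)⟫_ℂ) : S = S' := by
  have hgen : ∀ x, S (v x) = S' (v x) := fun x => eq_of_inner_gen hd' (h x)
  have hsp : ∀ u ∈ Submodule.span ℂ (Set.range v), S u = S' u := by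
    intro u hu
    induction hu using Submodule.span_induction with
    | mem u hu => obtain ⟨x, rfl⟩ := hu; exact hgen x
    | zero => simp
    | add u₁ u₂ _ _ h₁ h₂ => simp only [map_add, h₁, h₂]
    | smul c u _ h₁ => simp only [map_smul, h₁]
  have hspan : Set.EqOn ⇑S ⇑S' (↑(Submodule.span ℂ (Set.range v)) : Set H) :=
    fun u hu => hsp u hu
  have hfe := Continuous.ext_on hd S.continuous S'.continuous hspan
  exact ContinuousLinearMap.ext fun u => congrFun hfe u

variable [CompleteSpace H] [CompleteSpace H']

lemma exists_intertwiner (K K' L : G → G → ℂ) (c : ℝ) (hc : 0 < c)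
    (hL : KernelSqLE L K K' c) (hLinv : ∀ x y z : G, L x y = L (z * x) (z * y))
    (π : G →* (H ≃ₗᵢ[ℂ] H)) (ξ₀ : H) (π' : G →* (H' ≃ₗᵢ[ℂ] H')) (ξ₀' : H')
    (hrep : IsGroupCyclicRep K π ξ₀) (hrep' : IsGroupCyclicRep K' π' ξ₀') :
    ∃ S : H →L[ℂ] H', (∀ (g : G) (u : H), S (π g u) = π' g (S u)) ∧
      (∀ x y : G, ⟪π' y ξ₀', S (π x ξ₀)⟫_ℂ = L x y) ∧
      ∀ u : H, ‖S u‖ ≤ Real.sqrt c * ‖u‖ := by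
  classical
  set v : G → H := fun x => π x ξ₀ with hvdef
  set w : G → H' := fun y => π' y ξ₀' with hwdef
  set ε : (G →₀ ℂ) →ₗ[ℂ] H := Finsupp.linearCombination ℂ v with hεdef
  set ε' : (G →₀ ℂ) →ₗ[ℂ] H' := Finsupp.linearCombination ℂ w with hε'def
  have hKv : ∀ x y, ⟪v y, v x⟫_ℂ = K x y := hrep.2
  have hK'w : ∀ x y, ⟪w y, w x⟫_ℂ = K' x y := hrep'.2
  have hdense : Dense (↑(LinearMap.range ε) : Set H) := by
    rw [hεdef, Finsupp.range_linearCombination]; exact hrep.1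
  have hdense' : Dense (↑(LinearMap.range ε') : Set H') := by
    rw [hε'def, Finsupp.range_linearCombination]; exact hrep'.1
  have happly : ∀ (u : G → H) (f : G →₀ ℂ),
      Finsupp.linearCombination ℂ u f = ∑ a ∈ f.support, f a • u a := by
    intro u f; rw [Finsupp.linearCombination_apply]; rfl
  have happly' : ∀ (u : G → H') (f : G →₀ ℂ),
      Finsupp.linearCombination ℂ u f = ∑ a ∈ f.support, f a • u a := by
    intro u f; rw [Finsupp.linearCombination_apply]; rfl
  -- key inequality
  have hkey : ∀ f g : G →₀ ℂ, ‖Bsum L f g‖ ≤ Real.sqrt c * ‖ε f‖ * ‖ε' g‖ := by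
    intro f g
    set n := f.support.card with hn
    set xf : Fin n → G := fun i => ((f.support.equivFin.symm i : G)) with hxf
    set ξ : Fin n → ℂ := fun i => f (xf i) with hξ
    set m := g.support.card with hm
    set yf : Fin m → G := fun j => ((g.support.equivFin.symm j : G)) with hyf
    set η : Fin m → ℂ := fun j => g (yf j) with hη
    have h1 : Bsum L f g = ∑ i, ∑ j, L (xf i) (yf j) * ξ i * (starRingEnd ℂ) (η j) := by
      rw [Bsum]
      rw [Finset.sum_congr rfl fun a _ =>
        sum_enum g (fun b => L a b * f a * (starRingEnd ℂ) (g b))]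
      exact sum_enum f _
    have h2 : ε f = ∑ i, ξ i • v (xf i) := by
      rw [hεdef, happly v f]; exact sum_enum f _
    have h3 : ε' g = ∑ j, η j • w (yf j) := by
      rw [hε'def, happly' w g]; exact sum_enum g _
    have h4 := hL n m xf yf ξ η
    rw [← h1, quad_re hKv xf ξ, quad_re hK'w yf η, ← h2, ← h3] at h4
    have := real_sqrt_bound hc.le (norm_nonneg _) (norm_nonneg _) (norm_nonneg _) h4
    linarith
  -- construction of the vector S₀ f
  have hvec : ∀ f : G →₀ ℂ, ∃ u : H',
      (∀ g, ⟪ε' g, u⟫_ℂ = Bsum L f g) ∧ ‖u‖ ≤ Real.sqrt c * ‖ε f‖ := by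
    intro f
    let ψ : (G →₀ ℂ) →ₗ[ℂ] ℂ :=
      { toFun := fun g => (starRingEnd ℂ) (Bsum L f g)
        map_add' := fun g₁ g₂ => by simp only [Bsum_add_right, map_add]
        map_smul' := fun a g => by
          simp only [Bsum_smul_right, map_mul, Complex.conj_conj, RingHom.id_apply,
            smul_eq_mul] }
    have hker : LinearMap.ker ε' ≤ LinearMap.ker ψ := by
      intro g hg
      simp only [LinearMap.mem_ker] at hg ⊢
      have hb := hkey f g
      rw [hg, norm_zero, mul_zero] at hb
      have hb0 : Bsum L f g = 0 := norm_le_zero_iff.mp hb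
      show (starRingEnd ℂ) (Bsum L f g) = 0
      rw [hb0, map_zero]
    let φ : ↥(LinearMap.range ε') →ₗ[ℂ] ℂ :=
      ((LinearMap.ker ε').liftQ ψ hker).comp
        (LinearMap.quotKerEquivRange ε').symm.toLinearMap
    have hφ : ∀ g : G →₀ ℂ,
        φ ⟨ε' g, LinearMap.mem_range_self ε' g⟩ = (starRingEnd ℂ) (Bsum L f g) := by
      intro g
      have h5 : (LinearMap.quotKerEquivRange ε').symm ⟨ε' g, LinearMap.mem_range_self ε' g⟩
          = Submodule.Quotient.mk g := by
        rw [LinearEquiv.symm_apply_eq]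
        exact Subtype.ext (LinearMap.quotKerEquivRange_apply_mk ε' g).symm
      show ((LinearMap.ker ε').liftQ ψ hker)
        ((LinearMap.quotKerEquivRange ε').symm ⟨ε' g, LinearMap.mem_range_self ε' g⟩)
          = (starRingEnd ℂ) (Bsum L f g)
      rw [h5, Submodule.liftQ_apply]
      rfl
    have hφbound : ∀ u : ↥(LinearMap.range ε'),
        ‖φ u‖ ≤ (Real.sqrt c * ‖ε f‖) * ‖u‖ := by
      rintro ⟨u, hu⟩
      obtain ⟨g, rfl⟩ := LinearMap.mem_range.mp hu
      rw [show (⟨ε' g, hu⟩ : ↥(LinearMap.range ε'))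
        = ⟨ε' g, LinearMap.mem_range_self ε' g⟩ from rfl, hφ g]
      have : ‖(⟨ε' g, LinearMap.mem_range_self ε' g⟩ : ↥(LinearMap.range ε'))‖ = ‖ε' g‖ := rfl
      rw [this, RCLike.norm_conj]
      exact hkey f g
    let φL := φ.mkContinuous (Real.sqrt c * ‖ε f‖) hφbound
    obtain ⟨Φ, hΦ1, hΦ2⟩ := exists_extension_norm_eq (LinearMap.range ε') φL
    refine ⟨(InnerProductSpace.toDual ℂ H').symm Φ, ?_, ?_⟩
    · intro g
      rw [← inner_conj_symm, InnerProductSpace.toDual_symm_apply]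
      have h6 : Φ (ε' g) = φL ⟨ε' g, LinearMap.mem_range_self ε' g⟩ :=
        hΦ1 ⟨ε' g, LinearMap.mem_range_self ε' g⟩
      rw [h6]
      have h7 : φL ⟨ε' g, LinearMap.mem_range_self ε' g⟩
          = φ ⟨ε' g, LinearMap.mem_range_self ε' g⟩ := rfl
      rw [h7, hφ g, Complex.conj_conj]
    · rw [LinearIsometryEquiv.norm_map]
      rw [hΦ2]
      exact φ.mkContinuous_norm_le (by positivity) hφbound
  choose S₀ hS₀inner hS₀norm using hvec
  -- determination
  have hdet : ∀ a b : H', (∀ g, ⟪ε' g, a⟫_ℂ = ⟪ε' g, b⟫_ℂ) → a = b := by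
    intro a b hab
    refine eq_of_inner_gen hrep'.1 ?_
    intro y
    have h8 := hab (Finsupp.single y 1)
    rw [hε'def, Finsupp.linearCombination_single, one_smul] at h8
    exact h8
  -- linearity
  have hadd : ∀ f₁ f₂, S₀ (f₁ + f₂) = S₀ f₁ + S₀ f₂ := by
    intro f₁ f₂
    apply hdet
    intro g
    rw [hS₀inner, Bsum_add_left, inner_add_right, hS₀inner, hS₀inner]
  have hsmul : ∀ (a : ℂ) (f : G →₀ ℂ), S₀ (a • f) = a • S₀ f := by
    intro a f
    apply hdet
    intro g
    rw [hS₀inner, Bsum_smul_left, inner_smul_right, hS₀inner]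
  let S₀lin : (G →₀ ℂ) →ₗ[ℂ] H' :=
    { toFun := S₀, map_add' := hadd, map_smul' := hsmul }
  have hkerS : LinearMap.ker ε ≤ LinearMap.ker S₀lin := by
    intro f hf
    simp only [LinearMap.mem_ker] at hf ⊢
    have hb := hS₀norm f
    rw [hf, norm_zero, mul_zero] at hb
    exact norm_le_zero_iff.mp hb
  let Slin : ↥(LinearMap.range ε) →ₗ[ℂ] H' :=
    ((LinearMap.ker ε).liftQ S₀lin hkerS).comp
      (LinearMap.quotKerEquivRange ε).symm.toLinearMap
  have hSlin : ∀ f : G →₀ ℂ, Slin ⟨ε f, LinearMap.mem_range_self ε f⟩ = S₀ f := by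
    intro f
    have h5 : (LinearMap.quotKerEquivRange ε).symm ⟨ε f, LinearMap.mem_range_self ε f⟩
        = Submodule.Quotient.mk f := by
      rw [LinearEquiv.symm_apply_eq]
      exact Subtype.ext (LinearMap.quotKerEquivRange_apply_mk ε f).symm
    show ((LinearMap.ker ε).liftQ S₀lin hkerS)
      ((LinearMap.quotKerEquivRange ε).symm ⟨ε f, LinearMap.mem_range_self ε f⟩) = S₀ f
    rw [h5, Submodule.liftQ_apply]
    rfl
  have hSbound : ∀ u : ↥(LinearMap.range ε), ‖Slin u‖ ≤ Real.sqrt c * ‖u‖ := by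
    rintro ⟨u, hu⟩
    obtain ⟨f, rfl⟩ := LinearMap.mem_range.mp hu
    rw [show (⟨ε f, hu⟩ : ↥(LinearMap.range ε))
      = ⟨ε f, LinearMap.mem_range_self ε f⟩ from rfl, hSlin f]
    exact hS₀norm f
  let SM := Slin.mkContinuous (Real.sqrt c) hSbound
  have hDR : DenseRange ⇑(LinearMap.range ε).subtypeL := by
    have h9 : Set.range ⇑(LinearMap.range ε).subtypeL = (↑(LinearMap.range ε) : Set H) :=
      Subtype.range_coe
    rw [DenseRange, h9]
    exact hdense
  have hUI : IsUniformInducing ⇑(LinearMap.range ε).subtypeL :=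
    isUniformEmbedding_subtype_val.isUniformInducing
  let S : H →L[ℂ] H' := SM.extend (LinearMap.range ε).subtypeL
  have hSε : ∀ f : G →₀ ℂ, S (ε f) = S₀ f := by
    intro f
    have h10 := SM.extend_eq hDR hUI
      ⟨ε f, LinearMap.mem_range_self ε f⟩
    have h11 : (LinearMap.range ε).subtypeL ⟨ε f, LinearMap.mem_range_self ε f⟩ = ε f := rfl
    rw [h11] at h10
    rw [h10]
    show Slin ⟨ε f, LinearMap.mem_range_self ε f⟩ = S₀ f
    exact hSlin f
  have hSinner : ∀ f g : G →₀ ℂ, ⟪ε' g, S (ε f)⟫_ℂ = Bsum L f g := by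
    intro f g; rw [hSε f]; exact hS₀inner f g
  have hvsingle : ∀ x : G, ε (Finsupp.single x 1) = v x := by
    intro x; rw [hεdef, Finsupp.linearCombination_single, one_smul]
  have hwsingle : ∀ y : G, ε' (Finsupp.single y 1) = w y := by
    intro y; rw [hε'def, Finsupp.linearCombination_single, one_smul]
  have hprop2 : ∀ x y : G, ⟪w y, S (v x)⟫_ℂ = L x y := by
    intro x y
    rw [← hvsingle x, ← hwsingle y, hSinner, Bsum_single]
  -- norm bound
  have hnorm : ∀ u : H, ‖S u‖ ≤ Real.sqrt c * ‖u‖ := by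
    have hcl : IsClosed {u : H | ‖S u‖ ≤ Real.sqrt c * ‖u‖} :=
      isClosed_le (continuous_norm.comp S.continuous) (continuous_const.mul continuous_norm)
    have hsub : (↑(LinearMap.range ε) : Set H) ⊆ {u : H | ‖S u‖ ≤ Real.sqrt c * ‖u‖} := by
      intro u hu
      obtain ⟨f, rfl⟩ := LinearMap.mem_range.mp hu
      show ‖S (ε f)‖ ≤ Real.sqrt c * ‖ε f‖
      rw [hSε f]
      exact hS₀norm f
    intro u
    have h12 : u ∈ closure (↑(LinearMap.range ε) : Set H) := by
      rw [hdense.closure_eq]; trivial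
    exact closure_minimal hsub hcl h12
  -- covariance of the vectors
  have hπv : ∀ z x : G, π z (v x) = v (z * x) := by
    intro z x
    show π z (π x ξ₀) = π (z * x) ξ₀
    rw [map_mul]
    rfl
  have hπ'w : ∀ z y : G, π' z (w y) = w (z * y) := by
    intro z y
    show π' z (π' y ξ₀') = π' (z * y) ξ₀'
    rw [map_mul]
    rfl
  have hεmap : ∀ (z : G) (f : G →₀ ℂ),
      π z (ε f) = ε (Finsupp.mapDomain (fun x => z * x) f) := by
    intro z f
    rw [hεdef, Finsupp.linearCombination_mapDomain, happly v f, happly (v ∘ fun x => z * x) f,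
      map_sum]
    refine Finset.sum_congr rfl fun a _ => ?_
    rw [map_smul]
    simp only [Function.comp_apply]
    rw [hπv]
  have hε'map : ∀ (z : G) (g : G →₀ ℂ),
      π' z (ε' g) = ε' (Finsupp.mapDomain (fun y => z * y) g) := by
    intro z g
    rw [hε'def, Finsupp.linearCombination_mapDomain, happly' w g,
      happly' (w ∘ fun y => z * y) g, map_sum]
    refine Finset.sum_congr rfl fun a _ => ?_
    rw [map_smul]
    simp only [Function.comp_apply]
    rw [hπ'w]
  -- intertwining on the dense range
  have hint0 : ∀ (z : G) (f : G →₀ ℂ), S (π z (ε f)) = π' z (S (ε f)) := by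
    intro z f
    apply hdet
    intro g
    rw [hεmap z f, hSinner]
    have hg : ε' g = π' z (ε' (Finsupp.mapDomain (fun y => z⁻¹ * y) g)) := by
      rw [hε'map z _, ← Finsupp.mapDomain_comp]
      have hid : ((fun y => z * y) ∘ fun y => z⁻¹ * y) = id := by
        funext y; simp [mul_inv_cancel_left]
      rw [hid, Finsupp.mapDomain_id]
    conv_rhs => rw [hg]
    rw [LinearIsometryEquiv.inner_map_map, hSinner]
    have hinj₁ : Function.Injective (fun x : G => z * x) := fun a b => by
      simp only [mul_right_inj, imp_self]
    have hinj₂ : Function.Injective (fun y : G => z⁻¹ * y) := fun a b => by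
      simp only [mul_right_inj, imp_self]
    rw [Bsum_mapDomain_left L hinj₁ f g, Bsum_mapDomain_right L hinj₂ f g]
    refine Finset.sum_congr rfl fun x _ => Finset.sum_congr rfl fun y _ => ?_
    have := hLinv x (z⁻¹ * y) z
    rw [mul_inv_cancel_left] at this
    rw [← this]
  have hint : ∀ (z : G) (u : H), S (π z u) = π' z (S u) := by
    intro z
    have hfun : (fun u : H => S (π z u)) = fun u : H => π' z (S u) := by
      have hd : Dense (↑(LinearMap.range ε) : Set H) := hdense
      refine Continuous.ext_on hd ?_ ?_ ?_
      · exact S.continuous.comp (π z).continuous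
      · exact (π' z).continuous.comp S.continuous
      · intro u hu
        obtain ⟨f, rfl⟩ := LinearMap.mem_range.mp hu
        exact hint0 z f
    exact fun u => congrFun hfun u
  exact ⟨S, hint, hprop2, hnorm⟩

end DutkayAux

/-- Intertwining operators between the cyclic unitary representations associated to two
group positive definite maps correspond to translation-invariant bikernels `L` with
`L² ≤ c K K'`. -/
theorem group_intertwiner {G : Type*} [Group G] (K K' : G → G → ℂ)
    (hK : IsPosDefKernel K) (hK' : IsPosDefKernel K')
    (hKinv : ∀ x y z : G, K x y = K (z * x) (z * y))
    (hK'inv : ∀ x y z : G, K' x y = K' (z * x) (z * y))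
    {H : Type*} [NormedAddCommGroup H] [InnerProductSpace ℂ H] [CompleteSpace H]
    {H' : Type*} [NormedAddCommGroup H'] [InnerProductSpace ℂ H'] [CompleteSpace H']
    (π : G →* (H ≃ₗᵢ[ℂ] H)) (ξ₀ : H) (π' : G →* (H' ≃ₗᵢ[ℂ] H')) (ξ₀' : H')
    (hrep : IsGroupCyclicRep K π ξ₀) (hrep' : IsGroupCyclicRep K' π' ξ₀') :
    (∀ (L : G → G → ℂ) (c : ℝ), 0 < c → KernelSqLE L K K' c →
      (∀ x y z : G, L x y = L (z * x) (z * y)) →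
      (∃! S : H →L[ℂ] H',
        (∀ (g : G) (v : H), S (π g v) = π' g (S v)) ∧
        (∀ x y : G, ⟪π' y ξ₀', S (π x ξ₀)⟫_ℂ = L x y)) ∧
      (∀ S : H →L[ℂ] H',
        ((∀ (g : G) (v : H), S (π g v) = π' g (S v)) ∧
         (∀ x y : G, ⟪π' y ξ₀', S (π x ξ₀)⟫_ℂ = L x y)) → ‖S‖ ≤ Real.sqrt c)) ∧
    (∀ S : H →L[ℂ] H', (∀ (g : G) (v : H), S (π g v) = π' g (S v)) →
      (∃! L : G → G → ℂ, ∀ x y : G, ⟪π' y ξ₀', S (π x ξ₀)⟫_ℂ = L x y) ∧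
      (∀ L : G → G → ℂ, (∀ x y : G, ⟪π' y ξ₀', S (π x ξ₀)⟫_ℂ = L x y) →
        (∀ x y z : G, L x y = L (z * x) (z * y)) ∧ KernelSqLE L K K' (‖S‖ ^ 2))) := by
  constructor
  · intro L c hc hL hLinv
    obtain ⟨S, hint, hSL, hnorm⟩ :=
      DutkayAux.exists_intertwiner K K' L c hc hL hLinv π ξ₀ π' ξ₀' hrep hrep'
    have huniq : ∀ S' : H →L[ℂ] H',
        ((∀ (g : G) (v : H), S' (π g v) = π' g (S' v)) ∧
         (∀ x y : G, ⟪π' y ξ₀', S' (π x ξ₀)⟫_ℂ = L x y)) → S' = S := by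
      rintro S' ⟨-, h2⟩
      exact DutkayAux.ext_of_inner hrep.1 hrep'.1 S' S
        (fun x y => by rw [h2 x y, hSL x y])
    refine ⟨⟨S, ⟨hint, hSL⟩, huniq⟩, ?_⟩
    intro S' hS'
    rw [huniq S' hS']
    exact S.opNorm_le_bound (Real.sqrt_nonneg c) hnorm
  · intro S hint
    refine ⟨⟨fun x y => ⟪π' y ξ₀', S (π x ξ₀)⟫_ℂ, fun x y => rfl, ?_⟩, ?_⟩
    · intro L' hL'
      funext x y
      exact (hL' x y).symm
    · intro L hL
      constructor
      · intro x y z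
        rw [← hL x y, ← hL (z * x) (z * y)]
        have h1 : (π (z * x)) ξ₀ = π z (π x ξ₀) := by rw [map_mul]; rfl
        have h2 : (π' (z * y)) ξ₀' = π' z (π' y ξ₀') := by rw [map_mul]; rfl
        rw [h1, h2, hint z (π x ξ₀), LinearIsometryEquiv.inner_map_map]
      · intro m n x y ξ η
        rw [DutkayAux.pair_inner S hL x y ξ η,
          DutkayAux.quad_re hrep.2 x ξ, DutkayAux.quad_re hrep'.2 y η]
        set A : H' := ∑ j, η j • (π' (y j)) ξ₀' with hA
        set B : H := ∑ i, ξ i • (π (x i)) ξ₀ with hB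
        have h1 : ‖⟪A, S B⟫_ℂ‖ ≤ ‖A‖ * ‖S B‖ := norm_inner_le_norm A (S B)
        have h2 : ‖S B‖ ≤ ‖S‖ * ‖B‖ := S.le_opNorm B
        have h3 : (0:ℝ) ≤ ‖A‖ := norm_nonneg A
        have h4 : (0:ℝ) ≤ ‖B‖ := norm_nonneg B
        have h5 : (0:ℝ) ≤ ‖S‖ := norm_nonneg S
        have h6 : (0:ℝ) ≤ ‖⟪A, S B⟫_ℂ‖ := norm_nonneg _
        have h7 : ‖⟪A, S B⟫_ℂ‖ ≤ ‖A‖ * (‖S‖ * ‖B‖) :=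
          le_trans h1 (mul_le_mul_of_nonneg_left h2 h3)
        calc ‖⟪A, S B⟫_ℂ‖ ^ 2 ≤ (‖A‖ * (‖S‖ * ‖B‖)) ^ 2 := pow_le_pow_left₀ h6 h7 2
          _ = ‖S‖ ^ 2 * ‖B‖ ^ 2 * ‖A‖ ^ 2 := by ring
end
end
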